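/- arXiv:0908.3331 — 7 statements merged into one kernel-verified Lean document; each statement's English description precedes it below -/
import Mathlib

section
/- Let X ⊆ ℝⁿ be a convex set and let G ≤ S_n be a group of permutations, acting on ℝⁿ by permuting coordinates, such that X^g = X for all g ∈ G and G acts transitively on the coordinate indices {1,…,n}. Then for every t ∈ ℝ, the affine hyperplane H_t = {x ∈ ℝⁿ : ∑ᵢ xᵢ = tn} meets X if and only if its center (t,…,t)ᵀ lies in X. -/
open scoped BigOperators

/-- If a convex set `X ⊆ ℝⁿ` is invariant under a group `G` of coordinate
permutations acting transitively on the indices, then for every `t`, the hyperplane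
`H_t = {x | ∑ xᵢ = tn}` meets `X` iff its center `(t,…,t)` lies in `X`. -/
theorem layer_feasible_iff_center_feasible (n : ℕ) (hn : 0 < n)
    (X : Set (Fin n → ℝ)) (hX : Convex ℝ X) (G : Subgroup (Equiv.Perm (Fin n)))
    (hinv : ∀ g ∈ G, (fun x : Fin n → ℝ => fun i => x (g⁻¹ i)) '' X = X)
    (htrans : ∀ i j : Fin n, ∃ g ∈ G, g i = j) :
    ∀ t : ℝ, (∃ x ∈ X, ∑ i, x i = t * n) ↔ (fun _ : Fin n => t) ∈ X := by
  intro t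
  constructor
  · rintro ⟨x, hxX, hsum⟩
    haveI : Fintype G := Fintype.ofFinite G
    have hcardpos : 0 < (Fintype.card G : ℝ) := by
      exact_mod_cast Fintype.card_pos
    set c : ℝ := (Fintype.card G : ℝ)⁻¹ with hc
    have hcpos : 0 ≤ c := le_of_lt (inv_pos.mpr hcardpos)
    set z : G → (Fin n → ℝ) := fun g => fun i => x ((g : Equiv.Perm (Fin n))⁻¹ i) with hz
    have hzX : ∀ g : G, z g ∈ X := by
      intro g
      have h := hinv (g : Equiv.Perm (Fin n)) g.2
      rw [← h]
      exact ⟨x, hxX, rfl⟩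
    set y : Fin n → ℝ := ∑ g : G, c • z g with hy
    have hyX : y ∈ X := by
      apply hX.sum_mem (fun g _ => hcpos)
      · rw [Finset.sum_const, Finset.card_univ, nsmul_eq_mul, hc]
        field_simp
      · intro g _
        exact hzX g
    have hyi : ∀ i, y i = c * ∑ g : G, x ((g : Equiv.Perm (Fin n))⁻¹ i) := by
      intro i
      simp [hy, hz, Finset.sum_apply, Finset.mul_sum]
    -- y is constant
    have hconst : ∀ i j : Fin n, y i = y j := by
      intro i j
      obtain ⟨σ, hσG, hσ⟩ := htrans j i
      rw [hyi, hyi]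
      congr 1
      refine Fintype.sum_equiv (Equiv.mulLeft (⟨σ, hσG⟩ : G)⁻¹) _ _ ?_
      intro g
      have h5 : (((⟨σ, hσG⟩ : G)⁻¹ * g : G) : Equiv.Perm (Fin n))⁻¹ j
          = (g : Equiv.Perm (Fin n))⁻¹ (σ j) := by
        simp [mul_inv_rev]
      show x ((g : Equiv.Perm (Fin n))⁻¹ i)
          = x ((((⟨σ, hσG⟩ : G)⁻¹ * g : G) : Equiv.Perm (Fin n))⁻¹ j)
      rw [h5, hσ]
    -- total sum of y
    have hysum : ∑ i, y i = t * n := by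
      have h1 : ∀ g : G, ∑ i, x ((g : Equiv.Perm (Fin n))⁻¹ i) = t * n := by
        intro g
        rw [← hsum]
        exact Fintype.sum_equiv (g : Equiv.Perm (Fin n))⁻¹ _ _ (fun i => rfl)
      calc ∑ i, y i = ∑ i, c * ∑ g : G, x ((g : Equiv.Perm (Fin n))⁻¹ i) := by
            simp only [hyi]
        _ = c * ∑ g : G, ∑ i, x ((g : Equiv.Perm (Fin n))⁻¹ i) := by
            rw [← Finset.mul_sum, Finset.sum_comm]
        _ = c * ∑ g : G, (t * n) := by simp only [h1]
        _ = t * n := by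
            rw [Finset.sum_const, Finset.card_univ, nsmul_eq_mul, hc]
            field_simp
    -- hence y i = t for all i
    set i0 : Fin n := ⟨0, hn⟩
    have hyval : ∀ i, y i = t := by
      have h2 : ∑ i, y i = (n : ℝ) * y i0 := by
        rw [Finset.sum_congr rfl (fun i _ => hconst i i0)]
        simp [Finset.sum_const, Finset.card_univ, nsmul_eq_mul]
      have hni0 : y i0 = t := by
        have hnne : (n : ℝ) ≠ 0 := by positivity
        have h3 : (n : ℝ) * y i0 = (n : ℝ) * t := by rw [← h2, hysum]; ring
        exact mul_left_cancel₀ hnne h3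
      intro i
      rw [hconst i i0, hni0]
    have : y = fun _ : Fin n => t := funext hyval
    rwa [← this]
  · intro h
    refine ⟨_, h, ?_⟩
    simp [Finset.sum_const, Finset.card_univ, nsmul_eq_mul, mul_comm]
end

section
/- Let X ⊆ ℝⁿ be a convex set, let G ≤ S_n act transitively on the coordinate indices {1,…,n} with X^g = X for all g ∈ G, and let a ∈ ℝ be such that (a,…,a)ᵀ ∈ X and (a,…,a)ᵀ maximizes x ↦ ∑ᵢ xᵢ over X. Then X contains an integer point if and only if there exists an integer point x ∈ X ∩ ℤⁿ whose coordinate sum k = ∑ᵢ xᵢ satisfies n⌊a⌋ ≤ k ≤ ⌊na⌋. In particular, it suffices to search the ⌊na⌋-th layer down to the (n⌊a⌋)-th layer, i.e., at most n + 1 layers, to either find a feasible integer point or conclude that none exists. -/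
open scoped BigOperators

/-- Let `X ⊆ ℝⁿ` be convex and invariant under a transitive group of
coordinate permutations, and let `(a,…,a) ∈ X` maximize `x ↦ ∑ xᵢ` over `X`. Then `X`
contains an integer point iff it contains an integer point whose coordinate sum `k`
satisfies `n⌊a⌋ ≤ k ≤ ⌊na⌋`. -/
theorem integer_point_in_bounded_layers (n : ℕ) (hn : 0 < n)
    (X : Set (Fin n → ℝ)) (hX : Convex ℝ X) (G : Subgroup (Equiv.Perm (Fin n)))
    (hinv : ∀ g ∈ G, (fun x : Fin n → ℝ => fun i => x (g⁻¹ i)) '' X = X)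
    (htrans : ∀ i j : Fin n, ∃ g ∈ G, g i = j)
    (a : ℝ) (ha : (fun _ : Fin n => a) ∈ X)
    (hmax : ∀ x ∈ X, ∑ i, x i ≤ n * a) :
    (∃ x : Fin n → ℤ, (fun i => (x i : ℝ)) ∈ X) ↔
      ∃ x : Fin n → ℤ, (fun i => (x i : ℝ)) ∈ X ∧
        n * ⌊a⌋ ≤ ∑ i, x i ∧ ∑ i, x i ≤ ⌊(n : ℝ) * a⌋ := by
  constructor
  · rintro ⟨x₀, hx₀⟩
    set k : ℤ := ∑ i, x₀ i with hk
    have hfloorbound : (n:ℤ) * ⌊a⌋ ≤ ⌊(n : ℝ) * a⌋ := by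
      rw [Int.le_floor]
      push_cast
      exact mul_le_mul_of_nonneg_left (Int.floor_le a) (by positivity)
    have hkfloor : k ≤ ⌊(n:ℝ) * a⌋ := by
      rw [Int.le_floor]
      calc (k:ℝ) = ∑ i, ((x₀ i : ℝ)) := by rw [hk]; push_cast; rfl
        _ ≤ n * a := hmax _ hx₀
    by_cases hcase : (n:ℤ) * ⌊a⌋ ≤ k
    · exact ⟨x₀, hx₀, hcase, hkfloor⟩
    · push_neg at hcase
      refine ⟨fun _ => ⌊a⌋, ?_, ?_, ?_⟩
      · -- membership of the constant point ⌊a⌋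
        haveI : Fintype G := Fintype.ofFinite G
        set z : Fin n → ℝ := fun i => (x₀ i : ℝ) with hzdef
        have hzX : z ∈ X := hx₀
        have hpg : ∀ g : G, (fun i => z ((g : Equiv.Perm (Fin n))⁻¹ i)) ∈ X := by
          intro g
          rw [← hinv g g.2]
          exact ⟨z, hzX, rfl⟩
        set N : ℝ := (Fintype.card G : ℝ) with hNdef
        have hNpos : 0 < N := by
          rw [hNdef]
          exact_mod_cast (Fintype.card_pos : 0 < Fintype.card G)
        have hm : (∑ g : G, N⁻¹ • (fun i => z ((g : Equiv.Perm (Fin n))⁻¹ i))) ∈ X := by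
          apply hX.sum_mem (fun _ _ => by positivity)
          · rw [Finset.sum_const, Finset.card_univ, nsmul_eq_mul]
            field_simp
            exact hNdef.symm
          · exact fun g _ => hpg g
        set f : Fin n → ℝ := fun i => ∑ g : G, z ((g : Equiv.Perm (Fin n))⁻¹ i) with hfdef
        have hconstf : ∀ i j : Fin n, f i = f j := by
          intro i j
          obtain ⟨h, hhG, hhij⟩ := htrans i j
          have hinvj : h⁻¹ j = i := by
            rw [← hhij]; exact Equiv.symm_apply_apply h i
          exact Fintype.sum_bijective (fun g : G => (⟨h, hhG⟩ : G) * g)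
            (Group.mulLeft_bijective _) _ _
            (fun g => by
              congr 1
              show (g : Equiv.Perm (Fin n))⁻¹ i
                  = ((h * (g : Equiv.Perm (Fin n)))⁻¹) j
              rw [mul_inv_rev]
              simp [hinvj]
              exact hinvj.symm)
        have hsumf : ∑ i, f i = N * (k : ℝ) := by
          rw [hfdef]
          rw [Finset.sum_comm]
          have : ∀ g : G, ∑ i, z ((g : Equiv.Perm (Fin n))⁻¹ i) = (k : ℝ) := by
            intro g
            rw [show (k:ℝ) = ∑ i, z i by rw [hk, hzdef]; push_cast; rfl]
            exact Equiv.sum_comp ((g : Equiv.Perm (Fin n))⁻¹) z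
          simp only [this]
          rw [Finset.sum_const, Finset.card_univ, nsmul_eq_mul]
        have hfval : ∀ i : Fin n, f i = N * (k : ℝ) / n := by
          intro i
          have h1 : ∑ j : Fin n, f j = n * f i := by
            rw [Finset.sum_congr rfl (fun j _ => hconstf j i)]
            rw [Finset.sum_const, Finset.card_univ, Fintype.card_fin, nsmul_eq_mul]
          have h2 : (n : ℝ) * f i = N * (k : ℝ) := by rw [← h1, hsumf]
          field_simp
          linarith [h2]
        have hmeq : (∑ g : G, N⁻¹ • (fun i => z ((g : Equiv.Perm (Fin n))⁻¹ i)))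
            = fun _ : Fin n => (k : ℝ) / n := by
          funext i
          rw [Finset.sum_apply]
          simp only [Pi.smul_apply, smul_eq_mul]
          rw [← Finset.mul_sum]
          show N⁻¹ * f i = (k : ℝ) / n
          rw [hfval i]
          field_simp
        rw [hmeq] at hm
        -- now the segment argument
        set q : ℝ := (k : ℝ) / n with hqdef
        have hnpos : (0:ℝ) < n := by exact_mod_cast hn
        have hq_lt : q < (⌊a⌋ : ℝ) := by
          rw [hqdef, div_lt_iff₀ hnpos]
          have : (k : ℝ) < (n : ℝ) * (⌊a⌋ : ℝ) := by exact_mod_cast hcase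
          linarith
        have hfa : (⌊a⌋ : ℝ) ≤ a := Int.floor_le a
        have hqa : q < a := lt_of_lt_of_le hq_lt hfa
        have hden : a - q > 0 := by linarith
        set t₁ : ℝ := (a - (⌊a⌋ : ℝ)) / (a - q) with ht₁def
        set t₂ : ℝ := ((⌊a⌋ : ℝ) - q) / (a - q) with ht₂def
        have ht₁ : 0 ≤ t₁ := by apply div_nonneg <;> linarith
        have ht₂ : 0 ≤ t₂ := by apply div_nonneg <;> linarith
        have htsum : t₁ + t₂ = 1 := by
          rw [ht₁def, ht₂def, ← add_div, div_eq_one_iff_eq (by linarith)]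
          ring
        have key : t₁ * q + t₂ * a = ((⌊a⌋ : ℤ) : ℝ) := by
          have hrw : t₁ * q + t₂ * a
              = ((a - ((⌊a⌋:ℤ):ℝ)) * q + (((⌊a⌋:ℤ):ℝ) - q) * a) / (a - q) := by
            rw [ht₁def, ht₂def]; ring
          rw [hrw, div_eq_iff (ne_of_gt hden)]
          ring
        have hmem := hX hm ha ht₁ ht₂ htsum
        have heq : ((t₁ • fun _ : Fin n => q) + t₂ • fun _ : Fin n => a)
            = (fun _ : Fin n => ((⌊a⌋ : ℤ) : ℝ)) := by
          funext i
          simp only [Pi.add_apply, Pi.smul_apply, smul_eq_mul]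
          exact key
        rw [heq] at hmem
        exact hmem
      · simp
      · calc ∑ _i : Fin n, ⌊a⌋ = (n:ℤ) * ⌊a⌋ := by simp [mul_comm]
          _ ≤ ⌊(n : ℝ) * a⌋ := hfloorbound
  · rintro ⟨x, hx, _, _⟩
    exact ⟨x, hx⟩
end

section
/- Let n ≥ 2, let X ⊆ ℝⁿ be convex, and let G ≤ S_n act (⌊n/2⌋+1)-transitively on the coordinate indices {1,…,n} with X^g = X for all g ∈ G. Let x ∈ X ∩ ℤⁿ with ∑ᵢ xᵢ = k, and suppose x is not a neighbor of the k-th layer. Then there exists an integer point y ∈ X ∩ ℤⁿ with ∑ᵢ yᵢ = k and ‖y − m_k‖ < ‖x − m_k‖, where m_k = (k/n,…,k/n)ᵀ is the center of the k-th layer. -/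
open scoped BigOperators

private lemma int_le_self_sq (u : ℤ) : u ≤ u ^ 2 := by
  rcases le_or_gt u 0 with h | h
  · exact h.trans (sq_nonneg u)
  · calc u = u * 1 := (mul_one u).symm
      _ ≤ u * u := by
        have h1 : (1 : ℤ) ≤ u := h
        exact mul_le_mul_of_nonneg_left h1 h.le
      _ = u ^ 2 := (sq u).symm

private lemma perm_pres_iff {n : ℕ} (g : Equiv.Perm (Fin n)) (S : Finset (Fin n))
    (h : ∀ u ∈ S, g u ∈ S) : ∀ u, g u ∈ S ↔ u ∈ S := by
  have himg : S.image g = S := by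
    apply Finset.eq_of_subset_of_card_le
    · intro v hv
      obtain ⟨u, hu, rfl⟩ := Finset.mem_image.1 hv
      exact h u hu
    · rw [Finset.card_image_of_injective _ g.injective]
  intro u
  constructor
  · intro hu
    rw [← himg] at hu
    obtain ⟨v, hv, hvu⟩ := Finset.mem_image.1 hu
    rwa [← g.injective hvu]
  · exact h u

private lemma exchange_max {n : ℕ} (t : Fin n → ℤ) (r : ℤ) (rn : ℕ) (hrn : rn ≤ n)
    (hcast : (rn : ℤ) = r) (hsum : ∑ i, t i = r) :
    ∃ S : Finset (Fin n), S.card = rn ∧ r ≤ ∑ i ∈ S, t i := by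
  have hne : (Finset.univ.powersetCard rn (α := Fin n)).Nonempty := by
    apply Finset.powersetCard_nonempty.2
    simpa using hrn
  obtain ⟨S, hS, hmax⟩ := Finset.exists_max_image _ (fun S => ∑ i ∈ S, t i) hne
  have hScard : S.card = rn := (Finset.mem_powersetCard.1 hS).2
  refine ⟨S, hScard, ?_⟩
  by_contra hlt
  push_neg at hlt
  have hlt' : ∑ i ∈ S, t i ≤ r - 1 := by omega
  have hi : ∃ i ∈ S, t i ≤ 0 := by
    by_contra hc
    push_neg at hc
    have : (rn : ℤ) ≤ ∑ i ∈ S, t i := by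
      calc (rn : ℤ) = S.card • (1 : ℤ) := by rw [hScard]; simp
        _ ≤ ∑ i ∈ S, t i := Finset.card_nsmul_le_sum S t 1 (fun i hi => hc i hi)
    omega
  obtain ⟨i, hiS, hti⟩ := hi
  have hj : ∃ j ∈ Sᶜ, 1 ≤ t j := by
    by_contra hc
    push_neg at hc
    have h1 : ∑ j ∈ Sᶜ, t j ≤ 0 := Finset.sum_nonpos (fun j hj => by
      have := hc j hj; omega)
    have h2 : ∑ i ∈ S, t i + ∑ j ∈ Sᶜ, t j = r := by
      rw [Finset.sum_add_sum_compl]; exact hsum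
    omega
  obtain ⟨j, hjc, htj⟩ := hj
  have hjS : j ∉ S := Finset.mem_compl.1 hjc
  set S' := insert j (S.erase i) with hS'
  have hjne : j ∉ S.erase i := fun h => hjS (Finset.mem_of_mem_erase h)
  have hcard' : S'.card = rn := by
    rw [hS', Finset.card_insert_of_notMem hjne, Finset.card_erase_of_mem hiS, hScard]
    have : 1 ≤ rn := by
      have := Finset.card_pos.2 ⟨i, hiS⟩; omega
    omega
  have hmem' : S' ∈ Finset.univ.powersetCard rn := by
    rw [Finset.mem_powersetCard]
    exact ⟨Finset.subset_univ _, hcard'⟩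
  have hsum' : ∑ u ∈ S', t u = t j + (∑ u ∈ S, t u - t i) := by
    rw [hS', Finset.sum_insert hjne]
    congr 1
    rw [← Finset.sum_erase_add S t hiS]
    ring
  have := hmax S' hmem'
  omega

private lemma exchange_min {n : ℕ} (t : Fin n → ℤ) (r : ℤ) (rn : ℕ) (hrn : rn ≤ n)
    (hr0 : 0 ≤ r) (hsum : ∑ i, t i = r) :
    ∃ S : Finset (Fin n), S.card = rn ∧ ∑ i ∈ S, t i ≤ r := by
  have hne : (Finset.univ.powersetCard rn (α := Fin n)).Nonempty := by
    apply Finset.powersetCard_nonempty.2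
    simpa using hrn
  obtain ⟨S, hS, hmin⟩ := Finset.exists_min_image _ (fun S => ∑ i ∈ S, t i) hne
  have hScard : S.card = rn := (Finset.mem_powersetCard.1 hS).2
  refine ⟨S, hScard, ?_⟩
  by_contra hlt
  push_neg at hlt
  have hlt' : r + 1 ≤ ∑ i ∈ S, t i := by omega
  have hi : ∃ i ∈ S, 1 ≤ t i := by
    by_contra hc
    push_neg at hc
    have : ∑ i ∈ S, t i ≤ 0 := Finset.sum_nonpos (fun i hi => by have := hc i hi; omega)
    omega
  obtain ⟨i, hiS, hti⟩ := hi
  have hj : ∃ j ∈ Sᶜ, t j ≤ 0 := by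
    by_contra hc
    push_neg at hc
    have h1 : (0:ℤ) ≤ ∑ j ∈ Sᶜ, t j := Finset.sum_nonneg (fun j hj => by
      have := hc j hj; omega)
    have h2 : ∑ i ∈ S, t i + ∑ j ∈ Sᶜ, t j = r := by
      rw [Finset.sum_add_sum_compl]; exact hsum
    omega
  obtain ⟨j, hjc, htj⟩ := hj
  have hjS : j ∉ S := Finset.mem_compl.1 hjc
  set S' := insert j (S.erase i) with hS'
  have hjne : j ∉ S.erase i := fun h => hjS (Finset.mem_of_mem_erase h)
  have hcard' : S'.card = rn := by
    rw [hS', Finset.card_insert_of_notMem hjne, Finset.card_erase_of_mem hiS, hScard]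
    have : 1 ≤ rn := by
      have := Finset.card_pos.2 ⟨i, hiS⟩; omega
    omega
  have hmem' : S' ∈ Finset.univ.powersetCard rn := by
    rw [Finset.mem_powersetCard]
    exact ⟨Finset.subset_univ _, hcard'⟩
  have hsum' : ∑ u ∈ S', t u = t j + (∑ u ∈ S, t u - t i) := by
    rw [hS', Finset.sum_insert hjne]
    congr 1
    rw [← Finset.sum_erase_add S t hiS]
    ring
  have := hmin S' hmem'
  omega

private lemma prescribe {n : ℕ} (hn : 2 ≤ n) (G : Subgroup (Equiv.Perm (Fin n)))
    (htrans : ∀ f₁ f₂ : Fin (n / 2 + 1) → Fin n,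
      Function.Injective f₁ → Function.Injective f₂ →
      ∃ g ∈ G, ∀ j, g (f₁ j) = f₂ j)
    (π : Equiv.Perm (Fin n)) (W : Finset (Fin n)) (hW : W.card ≤ n / 2 + 1) :
    ∃ g ∈ G, ∀ i ∈ W, g i = π i := by
  have hmn : n / 2 + 1 ≤ n := by
    have := Nat.div_lt_self (show 0 < n by omega) (show 1 < 2 by norm_num)
    omega
  obtain ⟨W', hWW', hW'card⟩ := Finset.exists_superset_card_eq hW
    (by rwa [Fintype.card_fin])
  set e := W'.orderIsoOfFin hW'card with he
  set f₁ : Fin (n / 2 + 1) → Fin n := fun j => (e j : Fin n) with hf₁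
  have hf₁inj : Function.Injective f₁ := fun a b hab => by
    apply e.injective
    exact Subtype.ext hab
  set f₂ : Fin (n / 2 + 1) → Fin n := fun j => π (f₁ j) with hf₂
  have hf₂inj : Function.Injective f₂ := fun a b hab => hf₁inj (π.injective hab)
  obtain ⟨g, hgG, hg⟩ := htrans f₁ f₂ hf₁inj hf₂inj
  refine ⟨g, hgG, fun i hi => ?_⟩
  have hi' : i ∈ W' := hWW' hi
  have : f₁ (e.symm ⟨i, hi'⟩) = i := by
    simp [hf₁]
  calc g i = g (f₁ (e.symm ⟨i, hi'⟩)) := by rw [this]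
    _ = f₂ (e.symm ⟨i, hi'⟩) := hg _
    _ = π i := by simp only [hf₂]; rw [this]

set_option maxHeartbeats 1600000 in
theorem closer_feasible_integer_point (n : ℕ) (hn : 2 ≤ n)
    (X : Set (Fin n → ℝ)) (hX : Convex ℝ X) (G : Subgroup (Equiv.Perm (Fin n)))
    (hinv : ∀ g ∈ G, (fun x : Fin n → ℝ => fun i => x (g⁻¹ i)) '' X = X)
    (htrans : ∀ f₁ f₂ : Fin (n / 2 + 1) → Fin n,
      Function.Injective f₁ → Function.Injective f₂ →
      ∃ g ∈ G, ∀ j, g (f₁ j) = f₂ j)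
    (x : Fin n → ℤ) (hxX : (fun i => (x i : ℝ)) ∈ X) (k : ℤ) (hk : ∑ i, x i = k)
    (hnotnb : ¬ ∀ y : Fin n → ℤ, ∑ i, y i = k →
      ∑ i, ((x i : ℝ) - (k : ℝ) / n) ^ 2 ≤ ∑ i, ((y i : ℝ) - (k : ℝ) / n) ^ 2) :
    ∃ y : Fin n → ℤ, (fun i => (y i : ℝ)) ∈ X ∧ ∑ i, y i = k ∧
      ∑ i, ((y i : ℝ) - (k : ℝ) / n) ^ 2 < ∑ i, ((x i : ℝ) - (k : ℝ) / n) ^ 2 := by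
  classical
  have hnz : ((n:ℤ)) ≠ 0 := by exact_mod_cast (by omega : n ≠ 0)
  have hnpos : (0:ℤ) < (n:ℤ) := by exact_mod_cast (by omega : 0 < n)
  set d : ℤ := k / (n:ℤ) with hd
  set r : ℤ := k % (n:ℤ) with hrdef
  have hr0 : 0 ≤ r := Int.emod_nonneg k hnz
  have hrlt : r < (n:ℤ) := Int.emod_lt_of_pos k hnpos
  have hknd : (n:ℤ) * d + r = k := Int.mul_ediv_add_emod k n
  set rn : ℕ := r.toNat with hrn
  have hrcast : (rn:ℤ) = r := Int.toNat_of_nonneg hr0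
  have hrnlt : rn < n := by
    have : (rn:ℤ) < (n:ℤ) := by rw [hrcast]; exact hrlt
    exact_mod_cast this
  set R : Finset (Fin n) := Finset.Iio (⟨rn, hrnlt⟩ : Fin n) with hRdef
  have hRmem : ∀ i : Fin n, i ∈ R ↔ (i:ℕ) < rn := by
    intro i; rw [hRdef, Finset.mem_Iio]; exact Iff.rfl
  have hRcard : R.card = rn := by rw [hRdef]; exact Fin.card_Iio _
  have hRccard : Rᶜ.card = n - rn := by
    rw [Finset.card_compl, hRcard, Fintype.card_fin]
  -- the canonical neighbor
  set y : Fin n → ℤ := fun i => if (i:ℕ) < rn then d + 1 else d with hy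
  have hyR : ∀ i ∈ R, y i = d + 1 := fun i hi => if_pos ((hRmem i).1 hi)
  have hyRc : ∀ i ∈ Rᶜ, y i = d := fun i hi =>
    if_neg (fun h => (Finset.mem_compl.1 hi) ((hRmem i).2 h))
  have hysum : ∑ i, y i = k := by
    rw [← Finset.sum_add_sum_compl R, Finset.sum_congr rfl hyR, Finset.sum_congr rfl hyRc,
      Finset.sum_const, Finset.sum_const, hRcard, hRccard, nsmul_eq_mul, nsmul_eq_mul]
    push_cast [Nat.cast_sub hrnlt.le, hrcast]
    linear_combination hknd
  -- membership helper
  have hmem : ∀ g ∈ G, ∀ v ∈ X, (fun i => v (g⁻¹ i)) ∈ X := by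
    intro g hg v hv
    rw [← hinv g hg]
    exact ⟨v, hv, rfl⟩
  -- image/iff helper
  have key : ∀ (g : Equiv.Perm (Fin n)) (A B : Finset (Fin n)), A.card = B.card →
      (∀ u ∈ A, g u ∈ B) → ∀ i, (g⁻¹ i ∈ A ↔ i ∈ B) := by
    intro g A B hAB h
    have himg : A.image g = B := by
      apply Finset.eq_of_subset_of_card_le
      · intro v hv
        obtain ⟨u, hu, rfl⟩ := Finset.mem_image.1 hv
        exact h u hu
      · rw [Finset.card_image_of_injective _ g.injective, hAB]
    intro i
    constructor
    · intro hh
      rw [← himg]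
      exact Finset.mem_image.2 ⟨g⁻¹ i, hh, by simp⟩
    · intro hh
      rw [← himg] at hh
      obtain ⟨u, hu, hgu⟩ := Finset.mem_image.1 hh
      have : g⁻¹ i = u := by rw [← hgu]; simp
      rwa [this]
  -- mapping a set of size rn onto R by an element of G
  have hmap : ∀ S : Finset (Fin n), S.card = rn →
      ∃ g ∈ G, ∀ i : Fin n, (g⁻¹ i ∈ S ↔ i ∈ R) := by
    intro S hScard
    have hcards : S.card = R.card := by rw [hScard, hRcard]
    have hcc : Sᶜ.card = Rᶜ.card := by
      rw [Finset.card_compl, Finset.card_compl, hScard, hRcard]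
    set e₁ : {u // u ∈ S} ≃ {u // u ∈ R} := Finset.equivOfCardEq hcards with he₁
    set e₂0 : {u // u ∈ Sᶜ} ≃ {u // u ∈ Rᶜ} := Finset.equivOfCardEq hcc with he₂0
    set e₂ : {u // ¬ u ∈ S} ≃ {u // ¬ u ∈ R} :=
      ((Equiv.subtypeEquivRight (fun u => (Finset.mem_compl (s := S) (a := u)).symm)).trans
        e₂0).trans (Equiv.subtypeEquivRight (fun u => Finset.mem_compl (s := R) (a := u)))
      with he₂
    set π : Equiv.Perm (Fin n) := Equiv.subtypeCongr e₁ e₂ with hπ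
    have hπS : ∀ u ∈ S, π u ∈ R := by
      intro u hu
      have : π u = (e₁ ⟨u, hu⟩ : Fin n) := by
        simp [hπ, Equiv.subtypeCongr, hu]
      rw [this]
      exact (e₁ ⟨u, hu⟩).2
    have hπSc : ∀ u, u ∉ S → π u ∉ R := by
      intro u hu
      have : π u = (e₂ ⟨u, hu⟩ : Fin n) := by
        simp [hπ, Equiv.subtypeCongr, hu]
      rw [this]
      exact (e₂ ⟨u, hu⟩).2
    by_cases hsmall : rn ≤ n / 2
    · obtain ⟨g, hgG, hg⟩ := prescribe hn G htrans π S (by rw [hScard]; omega)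
      refine ⟨g, hgG, key g S R hcards (fun u hu => ?_)⟩
      rw [hg u hu]; exact hπS u hu
    · obtain ⟨g, hgG, hg⟩ := prescribe hn G htrans π Sᶜ
        (by rw [Finset.card_compl, hScard, Fintype.card_fin]; omega)
      have h1 : ∀ i, (g⁻¹ i ∈ Sᶜ ↔ i ∈ Rᶜ) := by
        apply key g Sᶜ Rᶜ hcc
        intro u hu
        rw [hg u hu]
        exact Finset.mem_compl.2 (hπSc u (Finset.mem_compl.1 hu))
      refine ⟨g, hgG, fun i => ?_⟩
      have := h1 i
      simp only [Finset.mem_compl] at this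
      exact not_iff_not.1 this
  -- swap elements preserving R setwise
  have hswap : ∀ i j : Fin n, (i ∈ R ↔ j ∈ R) →
      ∃ g ∈ G, (∀ u, g u ∈ R ↔ u ∈ R) ∧ g j = i := by
    intro i j hij
    set small : Finset (Fin n) := if rn ≤ n / 2 then R else Rᶜ with hsm
    have hsm_or : small = R ∨ small = Rᶜ := by
      rw [hsm]; split
      · exact Or.inl rfl
      · exact Or.inr rfl
    have hsmcard : small.card ≤ n / 2 := by
      rw [hsm]; split
      · rwa [hRcard]
      · rw [hRccard]; omega
    have hijsm : i ∈ small ↔ j ∈ small := by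
      rcases hsm_or with h | h <;> rw [h]
      · exact hij
      · simp only [Finset.mem_compl]; exact not_congr hij
    obtain ⟨g, hgG, hg⟩ := prescribe hn G htrans (Equiv.swap i j) (insert j small)
      (le_trans (Finset.card_insert_le _ _) (by omega))
    have hgj : g j = i := by
      rw [hg j (Finset.mem_insert_self _ _)]
      exact Equiv.swap_apply_right i j
    have hpres : ∀ u ∈ small, g u ∈ small := by
      intro u hu
      rw [hg u (Finset.mem_insert_of_mem hu)]
      rcases eq_or_ne u i with rfl | hui
      · rw [Equiv.swap_apply_left]; exact hijsm.1 hu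
      · rcases eq_or_ne u j with rfl | huj
        · rw [Equiv.swap_apply_right]; exact hijsm.2 hu
        · rw [Equiv.swap_apply_of_ne_of_ne hui huj]; exact hu
    have hiffsm := perm_pres_iff g small hpres
    refine ⟨g, hgG, ?_, hgj⟩
    rcases hsm_or with h | h
    · rwa [h] at hiffsm
    · intro u
      have := hiffsm u
      rw [h] at this
      simp only [Finset.mem_compl] at this
      exact not_iff_not.1 this
  -- sums over R of permuted x
  set t : Fin n → ℤ := fun i => x i - d with ht
  have htsum : ∑ i, t i = r := by
    rw [ht]
    rw [Finset.sum_sub_distrib, Finset.sum_const, Finset.card_univ, Fintype.card_fin, hk,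
      nsmul_eq_mul]
    linear_combination -hknd
  obtain ⟨S₁, hS₁card, hS₁⟩ := exchange_min t r rn hrnlt.le hr0 htsum
  obtain ⟨S₂, hS₂card, hS₂⟩ := exchange_max t r rn hrnlt.le hrcast htsum
  obtain ⟨g₁, hg₁G, hg₁⟩ := hmap S₁ hS₁card
  obtain ⟨g₂, hg₂G, hg₂⟩ := hmap S₂ hS₂card
  set A : Fin n → ℝ := fun i => ((x (g₁⁻¹ i) : ℤ) : ℝ) with hA
  set B : Fin n → ℝ := fun i => ((x (g₂⁻¹ i) : ℤ) : ℝ) with hB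
  have hAX : A ∈ X := hmem g₁ hg₁G _ hxX
  have hBX : B ∈ X := hmem g₂ hg₂G _ hxX
  have hsumtrans : ∀ (g : Equiv.Perm (Fin n)) (S : Finset (Fin n)),
      (∀ i, (g⁻¹ i ∈ S ↔ i ∈ R)) →
      ∑ i ∈ R, ((x (g⁻¹ i) : ℤ) : ℝ) = ((∑ u ∈ S, x u : ℤ) : ℝ) := by
    intro g S hgS
    have himg : S.image g = R := by
      ext i
      rw [Finset.mem_image]
      constructor
      · rintro ⟨u, hu, rfl⟩
        have : g⁻¹ (g u) ∈ S := by simpa using hu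
        exact (hgS (g u)).1 this
      · intro hi
        exact ⟨g⁻¹ i, (hgS i).2 hi, by simp⟩
    rw [← himg, Finset.sum_image (fun u _ v _ h => g.injective h)]
    push_cast
    apply Finset.sum_congr rfl
    intro u _
    simp
  have hAR : ∑ i ∈ R, A i = ((∑ u ∈ S₁, x u : ℤ) : ℝ) := hsumtrans g₁ S₁ hg₁
  have hBR : ∑ i ∈ R, B i = ((∑ u ∈ S₂, x u : ℤ) : ℝ) := hsumtrans g₂ S₂ hg₂
  have hAuniv : ∑ i, A i = (k:ℝ) := by
    rw [hA]
    rw [Equiv.sum_comp g₁⁻¹ (fun u => ((x u : ℤ) : ℝ))]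
    push_cast [← hk]
    rfl
  have hBuniv : ∑ i, B i = (k:ℝ) := by
    rw [hB]
    rw [Equiv.sum_comp g₂⁻¹ (fun u => ((x u : ℤ) : ℝ))]
    push_cast [← hk]
    rfl
  set a : ℤ := ∑ u ∈ S₁, x u with hadef
  set b : ℤ := ∑ u ∈ S₂, x u with hbdef
  set τ : ℤ := r * (d + 1) with hτdef
  have hsplit : ∀ S : Finset (Fin n), S.card = rn →
      ∑ u ∈ S, x u = (∑ u ∈ S, t u) + (rn:ℤ) * d := by
    intro S hc
    have : ∀ u, x u = t u + d := fun u => by rw [ht]; ring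
    rw [Finset.sum_congr rfl (fun u _ => this u), Finset.sum_add_distrib,
      Finset.sum_const, hc, nsmul_eq_mul]
  have ha : a ≤ τ := by
    have h1 := hsplit S₁ hS₁card
    rw [hrcast] at h1
    rw [hadef, hτdef]
    rw [h1]
    nlinarith [hS₁]
  have hb : τ ≤ b := by
    have h1 := hsplit S₂ hS₂card
    rw [hrcast] at h1
    rw [hbdef, hτdef]
    rw [h1]
    nlinarith [hS₂]
  set lam : ℝ := (((τ:ℤ):ℝ) - ((a:ℤ):ℝ)) / (((b:ℤ):ℝ) - ((a:ℤ):ℝ)) with hlam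
  have haτ : ((a:ℤ):ℝ) ≤ ((τ:ℤ):ℝ) := by exact_mod_cast ha
  have hτb : ((τ:ℤ):ℝ) ≤ ((b:ℤ):ℝ) := by exact_mod_cast hb
  have hlam0 : 0 ≤ lam := by
    rcases eq_or_lt_of_le (haτ.trans hτb) with h | h
    · have : ((τ:ℤ):ℝ) = ((a:ℤ):ℝ) := le_antisymm (by linarith) haτ
      rw [hlam, this]
      simp
    · rw [hlam]
      exact div_nonneg (by linarith) (by linarith)
  have hlam1 : lam ≤ 1 := by
    rcases eq_or_lt_of_le (haτ.trans hτb) with h | h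
    · have : ((τ:ℤ):ℝ) = ((a:ℤ):ℝ) := le_antisymm (by linarith) haτ
      rw [hlam, this]
      simp
    · rw [hlam]
      rw [div_le_one (by linarith)]
      linarith
  set x' : Fin n → ℝ := (1 - lam) • A + lam • B with hx'
  have hx'X : x' ∈ X := hX hAX hBX (by linarith) hlam0 (by ring)
  have hx'R : ∑ i ∈ R, x' i = ((τ:ℤ):ℝ) := by
    have : ∑ i ∈ R, x' i = (1 - lam) * (((a:ℤ):ℝ)) + lam * (((b:ℤ):ℝ)) := by
      rw [hx']
      simp only [Pi.add_apply, Pi.smul_apply, smul_eq_mul]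
      rw [Finset.sum_add_distrib, ← Finset.mul_sum, ← Finset.mul_sum, hAR, hBR]
    rw [this]
    rcases eq_or_lt_of_le (haτ.trans hτb) with h | h
    · have hτa : ((τ:ℤ):ℝ) = ((a:ℤ):ℝ) := le_antisymm (by linarith) haτ
      rw [hlam, hτa]
      simp
    · have hmul : lam * (((b:ℤ):ℝ) - ((a:ℤ):ℝ)) = ((τ:ℤ):ℝ) - ((a:ℤ):ℝ) := by
        rw [hlam]
        exact div_mul_cancel₀ _ (by linarith : ((b:ℤ):ℝ) - ((a:ℤ):ℝ) ≠ 0)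
      linear_combination hmul
  have hx'univ : ∑ i, x' i = (k:ℝ) := by
    rw [hx']
    simp only [Pi.add_apply, Pi.smul_apply, smul_eq_mul]
    rw [Finset.sum_add_distrib, ← Finset.mul_sum, ← Finset.mul_sum, hAuniv, hBuniv]
    ring
  have hx'Rc : ∑ i ∈ Rᶜ, x' i = ((n:ℝ) - (rn:ℝ)) * ((d:ℤ):ℝ) := by
    have h1 : ∑ i ∈ R, x' i + ∑ i ∈ Rᶜ, x' i = ∑ i, x' i := Finset.sum_add_sum_compl R x'
    rw [hx'R, hx'univ] at h1
    have h2 : ((τ:ℤ):ℝ) = (rn:ℝ) * (((d:ℤ):ℝ) + 1) := by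
      rw [hτdef]
      push_cast [← hrcast]
      ring
    have h3 : (k:ℝ) = (n:ℝ) * ((d:ℤ):ℝ) + (rn:ℝ) := by
      push_cast [← hrcast] at hknd ⊢
      exact_mod_cast hknd.symm
    rw [h2, h3] at h1
    linarith
  -- the stabilizer of R
  set Kfin : Finset (Equiv.Perm (Fin n)) :=
    Finset.univ.filter (fun g => g ∈ G ∧ ∀ u, g u ∈ R ↔ u ∈ R) with hK
  have hKspec : ∀ g, g ∈ Kfin ↔ (g ∈ G ∧ ∀ u, g u ∈ R ↔ u ∈ R) := by
    intro g; rw [hK, Finset.mem_filter]; simp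
  have h1K : (1 : Equiv.Perm (Fin n)) ∈ Kfin := (hKspec 1).2 ⟨G.one_mem, by simp⟩
  have hKpos : 0 < Kfin.card := Finset.card_pos.2 ⟨1, h1K⟩
  have hKmul : ∀ κ κ₀ : Equiv.Perm (Fin n), κ ∈ Kfin → κ₀ ∈ Kfin → κ * κ₀ ∈ Kfin := by
    intro κ κ₀ h h₀
    obtain ⟨hG1, hpr⟩ := (hKspec κ).1 h
    obtain ⟨hG0, hpr₀⟩ := (hKspec κ₀).1 h₀
    refine (hKspec _).2 ⟨G.mul_mem hG1 hG0, fun u => ?_⟩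
    rw [Equiv.Perm.mul_apply, hpr, hpr₀]
  have hKinv : ∀ κ : Equiv.Perm (Fin n), κ ∈ Kfin → κ⁻¹ ∈ Kfin := by
    intro κ h
    obtain ⟨hG1, hpr⟩ := (hKspec κ).1 h
    refine (hKspec _).2 ⟨G.inv_mem hG1, fun u => ?_⟩
    have := hpr (κ⁻¹ u)
    rw [Equiv.Perm.coe_inv, Equiv.apply_symm_apply] at this
    exact this.symm
  -- averaging identity
  have havg : ∀ (Afin : Finset (Fin n)), (∀ g ∈ Kfin, ∀ u, (g u ∈ Afin ↔ u ∈ Afin)) →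
      (∀ p q : Fin n, p ∈ Afin → q ∈ Afin → ∃ g ∈ Kfin, g q = p) →
      ∀ i ∈ Afin, (Afin.card : ℝ) * ∑ κ ∈ Kfin, x' (κ⁻¹ i)
        = (Kfin.card : ℝ) * ∑ j ∈ Afin, x' j := by
    intro Afin hiff htr i hi
    have hmapsto : ∀ κ ∈ Kfin, κ⁻¹ i ∈ Afin := by
      intro κ hκ
      have := hiff κ hκ (κ⁻¹ i)
      rw [Equiv.Perm.coe_inv, Equiv.apply_symm_apply] at this
      exact this.1 hi
    have hfib := Finset.sum_fiberwise_of_maps_to hmapsto (fun κ => x' (κ⁻¹ i))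
    set c : ℕ := (Kfin.filter (fun κ => κ⁻¹ i = i)).card with hc
    have hcardeq : ∀ j ∈ Afin, (Kfin.filter (fun κ => κ⁻¹ i = j)).card = c := by
      intro j hj
      obtain ⟨κ₀, hκ₀K, hκ₀⟩ := htr j i hj hi
      rw [hc]
      apply Finset.card_bij' (fun κ _ => κ * κ₀) (fun κ _ => κ * κ₀⁻¹)
      · intro κ hκ
        rw [Finset.mem_filter] at hκ ⊢
        refine ⟨hKmul κ κ₀ hκ.1 hκ₀K, ?_⟩
        rw [mul_inv_rev, Equiv.Perm.mul_apply, hκ.2]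
        rw [← hκ₀]
        simp
      · intro κ hκ
        rw [Finset.mem_filter] at hκ ⊢
        refine ⟨hKmul κ κ₀⁻¹ hκ.1 (hKinv κ₀ hκ₀K), ?_⟩
        rw [mul_inv_rev, inv_inv, Equiv.Perm.mul_apply, hκ.2]
        exact hκ₀
      · intro κ _; group
      · intro κ _; group
    have hcardsum : Kfin.card = ∑ j ∈ Afin, (Kfin.filter (fun κ => κ⁻¹ i = j)).card :=
      Finset.card_eq_sum_card_fiberwise hmapsto
    have hKc : Kfin.card = Afin.card * c := by
      rw [hcardsum, Finset.sum_congr rfl hcardeq, Finset.sum_const, smul_eq_mul]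
    have hinner : ∀ j ∈ Afin, ∑ κ ∈ Kfin.filter (fun κ => κ⁻¹ i = j), x' (κ⁻¹ i)
        = (c : ℝ) * x' j := by
      intro j hj
      rw [Finset.sum_congr rfl (fun κ hκ => by rw [(Finset.mem_filter.1 hκ).2]),
        Finset.sum_const, nsmul_eq_mul, hcardeq j hj]
    calc (Afin.card : ℝ) * ∑ κ ∈ Kfin, x' (κ⁻¹ i)
        = (Afin.card : ℝ) * ∑ j ∈ Afin, ((c:ℝ) * x' j) := by
          rw [← hfib, Finset.sum_congr rfl hinner]
      _ = ((Afin.card * c : ℕ) : ℝ) * ∑ j ∈ Afin, x' j := by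
          rw [← Finset.mul_sum]
          push_cast
          ring
      _ = (Kfin.card : ℝ) * ∑ j ∈ Afin, x' j := by rw [← hKc]
  have hiffR : ∀ g ∈ Kfin, ∀ u, g u ∈ R ↔ u ∈ R := fun g hg => ((hKspec g).1 hg).2
  have hiffRc : ∀ g ∈ Kfin, ∀ u, g u ∈ Rᶜ ↔ u ∈ Rᶜ := by
    intro g hg u
    simp only [Finset.mem_compl]
    exact not_congr (hiffR g hg u)
  have htrR : ∀ p q : Fin n, p ∈ R → q ∈ R → ∃ g ∈ Kfin, g q = p := by
    intro p q hp hq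
    obtain ⟨g, hgG, hpr, hgq⟩ := hswap p q (iff_of_true hp hq)
    exact ⟨g, (hKspec g).2 ⟨hgG, hpr⟩, hgq⟩
  have htrRc : ∀ p q : Fin n, p ∈ Rᶜ → q ∈ Rᶜ → ∃ g ∈ Kfin, g q = p := by
    intro p q hp hq
    obtain ⟨g, hgG, hpr, hgq⟩ := hswap p q
      (iff_of_false (Finset.mem_compl.1 hp) (Finset.mem_compl.1 hq))
    exact ⟨g, (hKspec g).2 ⟨hgG, hpr⟩, hgq⟩
  -- the averaged point
  set N : ℕ := Kfin.card with hN
  set z : Fin n → ℝ := fun i => (N:ℝ)⁻¹ * ∑ κ ∈ Kfin, x' (κ⁻¹ i) with hz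
  have hNne : (N:ℝ) ≠ 0 := by
    have h0 : 0 < N := hKpos
    exact Nat.cast_ne_zero.2 (by omega)
  have hzX : z ∈ X := by
    have hzeq : z = ∑ κ ∈ Kfin, (N:ℝ)⁻¹ • (fun i => x' ((κ:Equiv.Perm (Fin n))⁻¹ i)) := by
      funext i
      show (N:ℝ)⁻¹ * ∑ κ ∈ Kfin, x' (κ⁻¹ i)
        = (∑ κ ∈ Kfin, (N:ℝ)⁻¹ • (fun i => x' ((κ:Equiv.Perm (Fin n))⁻¹ i))) i
      rw [Finset.sum_apply, Finset.mul_sum]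
      simp only [Pi.smul_apply, smul_eq_mul]
    rw [hzeq]
    refine hX.sum_mem (fun κ _ => by positivity) ?_
      (fun κ hκ => hmem κ ((hKspec κ).1 hκ).1 x' hx'X)
    rw [Finset.sum_const, nsmul_eq_mul]
    field_simp
    rfl
  have hzy : z = fun i => ((y i : ℤ) : ℝ) := by
    funext i
    by_cases hi : (i:ℕ) < rn
    · have hiR : i ∈ R := (hRmem i).2 hi
      have h1 := havg R hiffR htrR i hiR
      rw [hx'R, hRcard] at h1
      have hrnne : ((rn:ℕ):ℝ) ≠ 0 := by
        have : 0 < rn := by omega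
        positivity
      have h2 : ((τ:ℤ):ℝ) = (rn:ℝ) * (((d:ℤ):ℝ) + 1) := by
        rw [hτdef]; push_cast [← hrcast]; ring
      rw [h2] at h1
      have h3 : ∑ κ ∈ Kfin, x' (κ⁻¹ i) = (N:ℝ) * (((d:ℤ):ℝ) + 1) := by
        apply mul_left_cancel₀ hrnne
        rw [h1]
        ring
      rw [hz]
      simp only
      rw [h3, hy]
      simp only [hi, if_pos]
      push_cast
      field_simp
    · have hiRc : i ∈ Rᶜ := Finset.mem_compl.2 (fun h => hi ((hRmem i).1 h))
      have h1 := havg Rᶜ hiffRc htrRc i hiRc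
      rw [hx'Rc, hRccard] at h1
      have hnrne : (((n - rn : ℕ)):ℝ) ≠ 0 := by
        have : 0 < n - rn := by omega
        positivity
      have h4 : (((n - rn : ℕ)):ℝ) = (n:ℝ) - (rn:ℝ) := by
        push_cast [Nat.cast_sub hrnlt.le]
        ring
      rw [h4] at h1
      have h3 : ∑ κ ∈ Kfin, x' (κ⁻¹ i) = (N:ℝ) * ((d:ℤ):ℝ) := by
        have hne2 : (n:ℝ) - (rn:ℝ) ≠ 0 := by rw [← h4]; exact hnrne
        apply mul_left_cancel₀ hne2
        rw [h1]
        ring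
      rw [hz]
      simp only
      rw [h3, hy]
      simp only [hi, if_neg, not_false_iff]
      field_simp
  -- distance identity
  have hdistid : ∀ w : Fin n → ℤ, ∑ i, w i = k →
      ∑ i, ((w i : ℝ) - (k:ℝ)/n) ^ 2
        = ((∑ i, (w i - d)^2 : ℤ):ℝ) - (r:ℝ)^2 / n := by
    intro w hw
    have hn0 : (n:ℝ) ≠ 0 := by
      have : 0 < n := by omega
      positivity
    have hkr : (k:ℝ) = (n:ℝ) * ((d:ℤ):ℝ) + ((r:ℤ):ℝ) := by exact_mod_cast hknd.symm
    have hkn : (k:ℝ)/n = ((d:ℤ):ℝ) + ((r:ℤ):ℝ)/n := by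
      rw [hkr]; field_simp
    have hsw : ∑ i, ((w i : ℝ) - ((d:ℤ):ℝ)) = ((r:ℤ):ℝ) := by
      rw [Finset.sum_sub_distrib, Finset.sum_const, Finset.card_univ, Fintype.card_fin,
        nsmul_eq_mul]
      have hsc : (∑ i, (w i:ℝ)) = (k:ℝ) := by exact_mod_cast hw
      rw [hsc, hkr]
      ring
    calc ∑ i, ((w i : ℝ) - (k:ℝ)/n) ^ 2
        = ∑ i, (((w i:ℝ) - ((d:ℤ):ℝ))^2 - 2*(((r:ℤ):ℝ)/n)*((w i:ℝ) - ((d:ℤ):ℝ))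
            + (((r:ℤ):ℝ)/n)^2) := by
          apply Finset.sum_congr rfl
          intro i _
          rw [hkn]
          ring
      _ = (∑ i, ((w i:ℝ) - ((d:ℤ):ℝ))^2) - 2*(((r:ℤ):ℝ)/n)*((r:ℤ):ℝ)
            + (n:ℝ)*(((r:ℤ):ℝ)/n)^2 := by
          rw [Finset.sum_add_distrib, Finset.sum_sub_distrib, ← Finset.mul_sum, hsw,
            Finset.sum_const, Finset.card_univ, Fintype.card_fin, nsmul_eq_mul]
      _ = ((∑ i, (w i - d)^2 : ℤ):ℝ) - (r:ℝ)^2 / n := by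
          push_cast
          field_simp
          ring
  push_neg at hnotnb
  obtain ⟨y₀, hy₀k, hy₀⟩ := hnotnb
  have hymin : ∑ i, (y i - d)^2 ≤ ∑ i, (y₀ i - d)^2 := by
    have h1 : ∑ i, (y i - d)^2 = (rn:ℤ) := by
      have hterm : ∀ i : Fin n, (y i - d)^2 = if (i:ℕ) < rn then 1 else 0 := by
        intro i
        rw [hy]
        by_cases h : (i:ℕ) < rn
        · simp [h]
        · simp [h]
      rw [Finset.sum_congr rfl (fun i _ => hterm i), Finset.sum_boole]
      congr 1
      have : Finset.univ.filter (fun i : Fin n => (i:ℕ) < rn) = R := by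
        ext i
        simp only [Finset.mem_filter, Finset.mem_univ, true_and]
        exact (hRmem i).symm
      rw [this, hRcard]
    have h2 : (r:ℤ) ≤ ∑ i, (y₀ i - d)^2 := by
      calc r = ∑ i, (y₀ i - d) := by
            rw [Finset.sum_sub_distrib, Finset.sum_const, Finset.card_univ,
              Fintype.card_fin, hy₀k, nsmul_eq_mul]
            linear_combination hknd
        _ ≤ ∑ i, (y₀ i - d)^2 := Finset.sum_le_sum (fun i _ => int_le_self_sq _)
    omega
  refine ⟨y, ?_, hysum, ?_⟩
  · rw [← hzy]; exact hzX
  · calc ∑ i, ((y i : ℝ) - (k:ℝ)/n) ^ 2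
        = ((∑ i, (y i - d)^2 : ℤ):ℝ) - (r:ℝ)^2 / n := hdistid y hysum
      _ ≤ ((∑ i, (y₀ i - d)^2 : ℤ):ℝ) - (r:ℝ)^2 / n := by
          have : ((∑ i, (y i - d)^2 : ℤ):ℝ) ≤ ((∑ i, (y₀ i - d)^2 : ℤ):ℝ) := by
            exact_mod_cast hymin
          linarith
      _ = ∑ i, ((y₀ i : ℝ) - (k:ℝ)/n) ^ 2 := (hdistid y₀ hy₀k).symm
      _ < ∑ i, ((x i : ℝ) - (k:ℝ)/n) ^ 2 := hy₀
end

section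
/- Let n ≥ 2, let X ⊆ ℝⁿ be convex, and let G ≤ S_n act (⌊n/2⌋+1)-transitively on the coordinate indices {1,…,n} with X^g = X for all g ∈ G. Then for every k ∈ ℤ, the k-th layer contains a point of X ∩ ℤⁿ if and only if some neighbor N ∈ 𝒩_k of the k-th layer lies in X. -/
open scoped BigOperators

lemma extend_perm {n : ℕ} : ∀ (s : ℕ) (h : s ≤ n) (u : Fin s → Fin n), Function.Injective u →
    ∃ π : Equiv.Perm (Fin n), ∀ t : Fin s, π (Fin.castLE h t) = u t := by
  intro s
  induction s with
  | zero => exact fun h u hu => ⟨1, fun t => t.elim0⟩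
  | succ s ih =>
    intro h u hu
    have h' : s ≤ n := le_trans (Nat.le_succ s) h
    obtain ⟨π', hπ'⟩ := ih h' (u ∘ Fin.castSucc) (hu.comp (Fin.castSucc_injective s))
    set x := Fin.castLE h (Fin.last s) with hx
    set a := π'⁻¹ (u (Fin.last s)) with ha
    refine ⟨π' * Equiv.swap x a, fun t => ?_⟩
    refine Fin.lastCases ?_ (fun t' => ?_) t
    · simp [Equiv.Perm.mul_apply, ha, hx]
    · have hy : Fin.castLE h (Fin.castSucc t') = Fin.castLE h' t' := by
        apply Fin.ext; simp
      have h1 : Fin.castLE h (Fin.castSucc t') ≠ x := by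
        rw [hx]
        intro hc
        have := congrArg Fin.val hc
        simp at this
        omega
      have h2 : Fin.castLE h (Fin.castSucc t') ≠ a := by
        intro hc
        have : π' (Fin.castLE h (Fin.castSucc t')) = u (Fin.last s) := by
          rw [hc, ha]; simp
        rw [hy, hπ' t'] at this
        exact (Fin.castSucc_lt_last t').ne (hu this)
      simp only [Equiv.Perm.mul_apply]
      rw [Equiv.swap_apply_of_ne_of_ne h1 h2, hy, hπ' t']
      rfl

lemma trans_ext {n : ℕ} (hn : 2 ≤ n) (G : Subgroup (Equiv.Perm (Fin n)))
    (htrans : ∀ f₁ f₂ : Fin (n / 2 + 1) → Fin n,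
      Function.Injective f₁ → Function.Injective f₂ →
      ∃ g ∈ G, ∀ j, g (f₁ j) = f₂ j)
    (s : ℕ) (hs : s ≤ n / 2 + 1) (u v : Fin s → Fin n)
    (hu : Function.Injective u) (hv : Function.Injective v) :
    ∃ g ∈ G, ∀ t, g (u t) = v t := by
  have hmn : n / 2 + 1 ≤ n := by omega
  have hsn : s ≤ n := le_trans hs hmn
  obtain ⟨π₁, hπ₁⟩ := extend_perm s hsn u hu
  obtain ⟨π₂, hπ₂⟩ := extend_perm s hsn v hv
  set f₁ : Fin (n / 2 + 1) → Fin n := fun j => π₁ (Fin.castLE hmn j) with hf₁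
  set f₂ : Fin (n / 2 + 1) → Fin n := fun j => π₂ (Fin.castLE hmn j) with hf₂
  have hif₁ : Function.Injective f₁ :=
    π₁.injective.comp (Fin.castLE_injective hmn)
  have hif₂ : Function.Injective f₂ :=
    π₂.injective.comp (Fin.castLE_injective hmn)
  obtain ⟨g, hg, hgf⟩ := htrans f₁ f₂ hif₁ hif₂
  refine ⟨g, hg, fun t => ?_⟩
  have key := hgf (Fin.castLE hs t)
  have e1 : Fin.castLE hmn (Fin.castLE hs t) = Fin.castLE hsn t := by
    apply Fin.ext; simp
  rw [hf₁, hf₂] at key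
  simp only [e1] at key
  rw [hπ₁ t, hπ₂ t] at key
  exact key

lemma snoc_inj {n s : ℕ} (f : Fin s → Fin n) (x : Fin n) (hf : Function.Injective f)
    (hx : ∀ t, f t ≠ x) : Function.Injective (Fin.snoc f x) := by
  intro t₁ t₂ h
  rcases Fin.eq_castSucc_or_eq_last t₁ with ⟨a, rfl⟩ | rfl <;>
    rcases Fin.eq_castSucc_or_eq_last t₂ with ⟨b, rfl⟩ | rfl
  · simp only [Fin.snoc_castSucc] at h
    exact congrArg Fin.castSucc (hf h)
  · simp only [Fin.snoc_castSucc, Fin.snoc_last] at h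
    exact absurd h (hx a)
  · simp only [Fin.snoc_castSucc, Fin.snoc_last] at h
    exact absurd h.symm (hx b)
  · rfl

-- enumeration of a finset
lemma enum_finset {n : ℕ} (S : Finset (Fin n)) :
    ∃ u : Fin S.card → Fin n, Function.Injective u ∧ (∀ t, u t ∈ S) ∧
      ∀ x ∈ S, ∃ t, u t = x := by
  refine ⟨fun t => (S.orderIsoOfFin rfl t : Fin n), ?_, fun t => (S.orderIsoOfFin rfl t).2, ?_⟩
  · intro a b h
    exact (S.orderIsoOfFin rfl).injective (Subtype.ext h)
  · intro x hx
    exact ⟨(S.orderIsoOfFin rfl).symm ⟨x, hx⟩, by simp⟩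

lemma image_char {n : ℕ} {g : Equiv.Perm (Fin n)} {S T : Finset (Fin n)}
    (hcard : S.card = T.card)
    (hmap : ∀ x ∈ S, g x ∈ T) : ∀ t, g⁻¹ t ∈ S ↔ t ∈ T := by
  have himg : S.image g = T := by
    apply Finset.eq_of_subset_of_card_le
    · intro t ht
      obtain ⟨x, hx, rfl⟩ := Finset.mem_image.mp ht
      exact hmap x hx
    · rw [Finset.card_image_of_injective _ g.injective, hcard]
  intro t
  constructor
  · intro h
    have : g (g⁻¹ t) ∈ S.image g := Finset.mem_image_of_mem g h
    simpa [himg] using this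
  · intro h
    rw [← himg] at h
    obtain ⟨x, hx, hgx⟩ := Finset.mem_image.mp h
    have : x = g⁻¹ t := by rw [← hgx]; simp
    rwa [← this]

lemma gA1 {n : ℕ} (hn : 2 ≤ n) (G : Subgroup (Equiv.Perm (Fin n)))
    (htrans : ∀ f₁ f₂ : Fin (n / 2 + 1) → Fin n,
      Function.Injective f₁ → Function.Injective f₂ →
      ∃ g ∈ G, ∀ j, g (f₁ j) = f₂ j)
    (S : Finset (Fin n)) (hS : S.card ≤ n / 2 + 1) {i j : Fin n}
    (hi : i ∈ S) (hj : j ∈ S) :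
    ∃ g ∈ G, (∀ t, g⁻¹ t ∈ S ↔ t ∈ S) ∧ g i = j := by
  obtain ⟨u, hu, huS, husurj⟩ := enum_finset S
  have hvinj : Function.Injective (fun t => Equiv.swap i j (u t)) :=
    (Equiv.swap i j).injective.comp hu
  obtain ⟨g, hg, hguv⟩ := trans_ext hn G htrans S.card hS u _ hu hvinj
  have hmap : ∀ x ∈ S, g x ∈ S := by
    intro x hx
    obtain ⟨t, rfl⟩ := husurj x hx
    rw [hguv t]
    show Equiv.swap i j (u t) ∈ S
    rcases eq_or_ne (u t) i with h | h
    · rw [h, Equiv.swap_apply_left]; exact hj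
    · rcases eq_or_ne (u t) j with h2 | h2
      · rw [h2, Equiv.swap_apply_right]; exact hi
      · rw [Equiv.swap_apply_of_ne_of_ne h h2]; exact huS t
  refine ⟨g, hg, image_char rfl hmap, ?_⟩
  obtain ⟨t, rfl⟩ := husurj i hi
  rw [hguv t]
  show Equiv.swap (u t) j (u t) = j
  rw [Equiv.swap_apply_left]

lemma gA2 {n : ℕ} (hn : 2 ≤ n) (G : Subgroup (Equiv.Perm (Fin n)))
    (htrans : ∀ f₁ f₂ : Fin (n / 2 + 1) → Fin n,
      Function.Injective f₁ → Function.Injective f₂ →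
      ∃ g ∈ G, ∀ j, g (f₁ j) = f₂ j)
    (S : Finset (Fin n)) (hS : S.card + 1 ≤ n / 2 + 1) {i j : Fin n}
    (hi : i ∉ S) (hj : j ∉ S) :
    ∃ g ∈ G, (∀ t, g⁻¹ t ∈ S ↔ t ∈ S) ∧ g i = j := by
  obtain ⟨u0, hu0, hu0S, husurj⟩ := enum_finset S
  have hui : Function.Injective (Fin.snoc u0 i : Fin (S.card+1) → Fin n) :=
    snoc_inj u0 i hu0 (fun t h => hi (h ▸ hu0S t))
  have hvi : Function.Injective (Fin.snoc u0 j : Fin (S.card+1) → Fin n) :=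
    snoc_inj u0 j hu0 (fun t h => hj (h ▸ hu0S t))
  obtain ⟨g, hg, hguv⟩ := trans_ext hn G htrans _ hS _ _ hui hvi
  have hfix : ∀ x ∈ S, g x = x := by
    intro x hx
    obtain ⟨t, rfl⟩ := husurj x hx
    have := hguv (Fin.castSucc t)
    simpa using this
  have hgi : g i = j := by
    have := hguv (Fin.last _)
    simpa using this
  refine ⟨g, hg, image_char rfl (fun x hx => ?_), hgi⟩
  rw [hfix x hx]; exact hx

lemma gB {n : ℕ} (hn : 2 ≤ n) (G : Subgroup (Equiv.Perm (Fin n)))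
    (htrans : ∀ f₁ f₂ : Fin (n / 2 + 1) → Fin n,
      Function.Injective f₁ → Function.Injective f₂ →
      ∃ g ∈ G, ∀ j, g (f₁ j) = f₂ j)
    (S T : Finset (Fin n)) (hS : S.card ≤ n / 2 + 1) (hcard : S.card = T.card) :
    ∃ g ∈ G, ∀ t, g⁻¹ t ∈ S ↔ t ∈ T := by
  obtain ⟨u, hu, huS, husurj⟩ := enum_finset S
  obtain ⟨v0, hv0, hv0T, _⟩ := enum_finset T
  have hvinj : Function.Injective (fun t : Fin S.card => v0 (Fin.cast (by rw [hcard]) t)) :=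
    hv0.comp (Fin.cast_injective _)
  obtain ⟨g, hg, hguv⟩ := trans_ext hn G htrans S.card hS u _ hu hvinj
  have hmap : ∀ x ∈ S, g x ∈ T := by
    intro x hx
    obtain ⟨t, rfl⟩ := husurj x hx
    rw [hguv t]
    exact hv0T _
  exact ⟨g, hg, image_char hcard hmap⟩

lemma step {n : ℕ} (hn : 2 ≤ n) (X : Set (Fin n → ℝ)) (hX : Convex ℝ X)
    (G : Subgroup (Equiv.Perm (Fin n)))
    (hinv : ∀ g ∈ G, (fun x : Fin n → ℝ => fun i => x (g⁻¹ i)) '' X = X)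
    (htrans : ∀ f₁ f₂ : Fin (n / 2 + 1) → Fin n,
      Function.Injective f₁ → Function.Injective f₂ →
      ∃ g ∈ G, ∀ j, g (f₁ j) = f₂ j)
    (z : Fin n → ℤ) (hz : (fun i => (z i : ℝ)) ∈ X)
    (hspan : ∃ i j, z i + 2 ≤ z j) :
    ∃ w : Fin n → ℤ, (fun i => (w i : ℝ)) ∈ X ∧ (∑ i, w i = ∑ i, z i) ∧
      ∑ i, (w i)^2 < ∑ i, (z i)^2 := by
  -- parity classes
  have hpar : ∀ i, z i % 2 = 0 ∨ z i % 2 = 1 := fun i => by omega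
  obtain ⟨S, hScard, hSiff⟩ : ∃ S : Finset (Fin n),
      2 * S.card ≤ n ∧ ∀ i j, z i % 2 = z j % 2 ↔ (i ∈ S ↔ j ∈ S) := by
    set E := Finset.univ.filter (fun i => z i % 2 = 0) with hE
    have hmemE : ∀ i, i ∈ E ↔ z i % 2 = 0 := by simp [hE]
    have hcards : E.card + Eᶜ.card = n := by
      rw [Finset.card_add_card_compl]; simp
    have hmemEc : ∀ i, i ∈ Eᶜ ↔ ¬ z i % 2 = 0 := by
      intro i; rw [Finset.mem_compl, hmemE]
    by_cases hc : E.card ≤ Eᶜ.card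
    · refine ⟨E, by omega, fun i j => ?_⟩
      rw [hmemE i, hmemE j]
      have h1 := hpar i; have h2 := hpar j; omega
    · refine ⟨Eᶜ, by omega, fun i j => ?_⟩
      rw [hmemEc i, hmemEc j]
      have h1 := hpar i; have h2 := hpar j; omega
  -- helper: membership in X of permuted point
  have hmemperm : ∀ g ∈ G, (fun t => (z (g⁻¹ t) : ℝ)) ∈ X := by
    intro g hg
    rw [← hinv g hg]
    exact ⟨fun i => (z i : ℝ), hz, rfl⟩
  by_cases hsame : ∃ i j, z i % 2 = z j % 2 ∧ z i ≠ z j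
  · -- midpoint case
    obtain ⟨i, j, hpij, hne⟩ := hsame
    have hSij : i ∈ S ↔ j ∈ S := (hSiff i j).mp hpij
    obtain ⟨g, hg, hchar, hgi⟩ : ∃ g ∈ G, (∀ t, g⁻¹ t ∈ S ↔ t ∈ S) ∧ g i = j := by
      by_cases hiS : i ∈ S
      · exact gA1 hn G htrans S (by omega) hiS (hSij.mp hiS)
      · exact gA2 hn G htrans S (by omega) hiS (fun hjS => hiS (hSij.mpr hjS))
    have hparg : ∀ t, z (g⁻¹ t) % 2 = z t % 2 := by
      intro t
      exact (hSiff (g⁻¹ t) t).mpr (hchar t)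
    have hgij : g⁻¹ j = i := by rw [← hgi]; simp
    have hzgj : z (g⁻¹ j) ≠ z j := by rw [hgij]; exact hne
    have hdiv : ∀ t, ∃ c, z t + z (g⁻¹ t) = 2 * c := by
      intro t
      refine ⟨(z t + z (g⁻¹ t)) / 2, ?_⟩
      have := hparg t; omega
    choose w hw using hdiv
    have hzg : (fun t => (z (g⁻¹ t) : ℝ)) ∈ X := hmemperm g hg
    have hwmem : (fun t => (w t : ℝ)) ∈ X := by
      have hc := hX hz hzg (by norm_num : (0:ℝ) ≤ 1/2) (by norm_num : (0:ℝ) ≤ 1/2)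
        (by norm_num)
      convert hc using 1
      funext t
      have := hw t
      have : (z t : ℝ) + (z (g⁻¹ t) : ℝ) = 2 * (w t : ℝ) := by exact_mod_cast this
      simp only [Pi.add_apply, Pi.smul_apply, smul_eq_mul]
      linarith
    have hsumg : ∑ t, z (g⁻¹ t) = ∑ t, z t := Equiv.sum_comp g⁻¹ z
    have hsumgsq : ∑ t, (z (g⁻¹ t))^2 = ∑ t, (z t)^2 := Equiv.sum_comp g⁻¹ (fun i => (z i)^2)
    refine ⟨w, hwmem, ?_, ?_⟩
    · have h2 : 2 * ∑ t, w t = ∑ t, (z t + z (g⁻¹ t)) := by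
        rw [Finset.mul_sum]
        exact Finset.sum_congr rfl (fun t _ => (hw t).symm)
      rw [Finset.sum_add_distrib, hsumg] at h2
      omega
    · have h4 : 4 * ∑ t, (w t)^2 = ∑ t, (z t + z (g⁻¹ t))^2 := by
        rw [Finset.mul_sum]
        refine Finset.sum_congr rfl (fun t _ => ?_)
        rw [hw t]; ring
      have hexp : ∑ t, (z t + z (g⁻¹ t))^2
          = 2*(∑ t, (z t)^2) + 2*(∑ t, (z (g⁻¹ t))^2) - ∑ t, (z t - z (g⁻¹ t))^2 := by
        rw [Finset.mul_sum, Finset.mul_sum, ← Finset.sum_add_distrib, ← Finset.sum_sub_distrib]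
        exact Finset.sum_congr rfl (fun t _ => by ring)
      have hpos : 0 < ∑ t, (z t - z (g⁻¹ t))^2 := by
        have hj : 0 < (z j - z (g⁻¹ j))^2 := by
          have : z j - z (g⁻¹ j) ≠ 0 := fun h => hzgj (by omega)
          positivity
        calc 0 < (z j - z (g⁻¹ j))^2 := hj
          _ ≤ ∑ t, (z t - z (g⁻¹ t))^2 :=
            Finset.single_le_sum (f := fun t => (z t - z (g⁻¹ t))^2)
              (fun t _ => sq_nonneg _) (Finset.mem_univ j)
      rw [hsumgsq] at hexp
      omega
  · -- two-valued case
    push_neg at hsame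
    obtain ⟨i₀, j₀, hij₀⟩ := hspan
    have hne₀ : z i₀ ≠ z j₀ := by omega
    have hp₀ : ¬ (z i₀ % 2 = z j₀ % 2) := fun h => hne₀ (hsame i₀ j₀ h)
    have hmem₀ : ¬ (i₀ ∈ S ↔ j₀ ∈ S) := fun h => hp₀ ((hSiff i₀ j₀).mpr h)
    -- pick p ∈ S, q ∉ S
    obtain ⟨p, q, hpS, hqS⟩ : ∃ p q, p ∈ S ∧ q ∉ S := by
      by_cases h : i₀ ∈ S
      · exact ⟨i₀, j₀, h, fun hj => hmem₀ ⟨fun _ => hj, fun _ => h⟩⟩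
      · have hj : j₀ ∈ S := by tauto
        exact ⟨j₀, i₀, hj, h⟩
    set a := z p with ha
    set b := z q with hb
    have hconstS : ∀ t ∈ S, z t = a := by
      intro t ht
      exact hsame t p ((hSiff t p).mpr ⟨fun _ => hpS, fun _ => ht⟩)
    have hconstC : ∀ t, t ∉ S → z t = b := by
      intro t ht
      exact hsame t q ((hSiff t q).mpr ⟨fun h => absurd h ht, fun h => absurd h hqS⟩)
    have hval : a + 2 ≤ b ∨ b + 2 ≤ a := by
      have h1 : z i₀ = a ∨ z i₀ = b := by
        by_cases h : i₀ ∈ S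
        · exact Or.inl (hconstS i₀ h)
        · exact Or.inr (hconstC i₀ h)
      have h2 : z j₀ = a ∨ z j₀ = b := by
        by_cases h : j₀ ∈ S
        · exact Or.inl (hconstS j₀ h)
        · exact Or.inr (hconstC j₀ h)
      omega
    -- T ⊆ Sᶜ with card = S.card
    have hccompl : S.card + Sᶜ.card = n := by
      rw [Finset.card_add_card_compl]; simp
    obtain ⟨T, hTsub, hTcard⟩ := Finset.exists_subset_card_eq (s := Sᶜ) (n := S.card) (by omega)
    obtain ⟨g, hg, hchar⟩ := gB hn G htrans S T (by omega) hTcard.symm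
    have hTS : ∀ t, t ∈ T → t ∉ S := fun t ht => Finset.mem_compl.mp (hTsub ht)
    have hzgv : ∀ t, z (g⁻¹ t) = if t ∈ T then a else b := by
      intro t
      by_cases h : t ∈ T
      · rw [if_pos h]; exact hconstS _ ((hchar t).mpr h)
      · rw [if_neg h]; exact hconstC _ (fun hc => h ((hchar t).mp hc))
    have hzv : ∀ t, z t = if t ∈ S then a else b := by
      intro t
      by_cases h : t ∈ S
      · rw [if_pos h]; exact hconstS _ h
      · rw [if_neg h]; exact hconstC _ h
    set ε : ℤ := if a ≤ b then 1 else -1 with hε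
    set A : ℤ := if a ≤ b then b - a else a - b with hA
    have hA2 : 2 ≤ A := by rw [hA]; split_ifs with h <;> omega
    have hεA : b - a = ε * A := by rw [hε, hA]; split_ifs with h <;> ring
    have hε2 : ε^2 = 1 := by rw [hε]; split_ifs <;> ring
    set w : Fin n → ℤ := fun t => if t ∈ S then a + ε else if t ∈ T then b - ε else b with hwdef
    have hzg : (fun t => (z (g⁻¹ t) : ℝ)) ∈ X := hmemperm g hg
    have hAR : (0:ℝ) < (A:ℝ) := by exact_mod_cast (by omega : (0:ℤ) < A)
    have hwmem : (fun t => (w t : ℝ)) ∈ X := by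
      have h1 : (0:ℝ) ≤ 1 - (A:ℝ)⁻¹ := by
        have : (A:ℝ)⁻¹ ≤ 1 := by
          rw [inv_le_one_iff₀]; right; exact_mod_cast (by omega : (1:ℤ) ≤ A)
        linarith
      have h2 : (0:ℝ) ≤ (A:ℝ)⁻¹ := by positivity
      have hc := hX hz hzg h1 h2 (by ring)
      convert hc using 1
      funext t
      simp only [Pi.add_apply, Pi.smul_apply, smul_eq_mul]
      rw [hzv t, hzgv t]
      have hbR : (b:ℝ) = (a:ℝ) + (ε:ℝ) * (A:ℝ) := by
        have : (b:ℝ) - a = (ε:ℝ) * A := by exact_mod_cast hεA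
        linarith
      by_cases h : t ∈ S
      · have hnT : t ∉ T := fun hc => (hTS t hc) h
        simp only [hwdef, if_pos h, if_neg hnT]
        push_cast
        rw [hbR]
        field_simp
        ring
      · by_cases h2 : t ∈ T
        · simp only [hwdef, if_neg h, if_pos h2]
          push_cast
          rw [hbR]
          field_simp
          ring
        · simp only [hwdef, if_neg h, if_neg h2]
          push_cast
          rw [hbR]
          field_simp
          ring
    have hdiff1 : ∀ t, w t - z t = (if t ∈ S then ε else 0) + (if t ∈ T then -ε else 0) := by
      intro t
      rw [hzv t]
      by_cases h : t ∈ S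
      · have hnT : t ∉ T := fun hc => (hTS t hc) h
        simp [hwdef, h, hnT]
      · by_cases h2 : t ∈ T
        · simp [hwdef, h, h2]
        · simp [hwdef, h, h2]
    have hsum1 : ∀ (c : ℤ), ∑ t, (if t ∈ S then c else 0) = S.card * c := by
      intro c
      rw [Finset.sum_ite_mem]
      simp [mul_comm]
    have hsum2 : ∀ (c : ℤ), ∑ t, (if t ∈ T then c else 0) = T.card * c := by
      intro c
      rw [Finset.sum_ite_mem]
      simp [mul_comm]
    refine ⟨w, hwmem, ?_, ?_⟩
    · have : ∑ t, (w t - z t) = 0 := by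
        calc ∑ t, (w t - z t)
            = ∑ t, ((if t ∈ S then ε else 0) + (if t ∈ T then -ε else 0)) :=
              Finset.sum_congr rfl (fun t _ => hdiff1 t)
          _ = S.card * ε + T.card * (-ε) := by
              rw [Finset.sum_add_distrib, hsum1, hsum2]
          _ = 0 := by rw [hTcard]; ring
      rw [Finset.sum_sub_distrib] at this
      omega
    · have hdiff2 : ∀ t, (w t)^2 - (z t)^2
          = (if t ∈ S then 2*ε*a + 1 else 0) + (if t ∈ T then -(2*ε*b) + 1 else 0) := by
        intro t
        rw [hzv t]
        by_cases h : t ∈ S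
        · have hnT : t ∉ T := fun hc => (hTS t hc) h
          simp only [hwdef, if_pos h, if_neg hnT]
          linear_combination hε2
        · by_cases h2 : t ∈ T
          · simp only [hwdef, if_neg h, if_pos h2]
            linear_combination hε2
          · simp [hwdef, h, h2]
      have hSpos : 0 < S.card := Finset.card_pos.mpr ⟨p, hpS⟩
      have : ∑ t, ((w t)^2 - (z t)^2) = S.card * (2*ε*a + 1) + T.card * (-(2*ε*b) + 1) := by
        calc ∑ t, ((w t)^2 - (z t)^2)
            = ∑ t, ((if t ∈ S then 2*ε*a + 1 else 0) + (if t ∈ T then -(2*ε*b) + 1 else 0)) :=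
              Finset.sum_congr rfl (fun t _ => hdiff2 t)
          _ = S.card * (2*ε*a + 1) + T.card * (-(2*ε*b) + 1) := by
              rw [Finset.sum_add_distrib, hsum1, hsum2]
      rw [hTcard] at this
      have hkey : (S.card:ℤ) * (2*ε*a + 1) + (S.card:ℤ) * (-(2*ε*b) + 1)
          = (S.card:ℤ) * (2 - 2*A) := by
        have hx : (ε:ℤ) * (a - b) = -A := by
          linear_combination (-ε) * hεA - A * hε2
        linear_combination (2*(S.card:ℤ)) * hx
      rw [hkey, Finset.sum_sub_distrib] at this
      have hcz : (1:ℤ) ≤ (S.card:ℤ) := by exact_mod_cast hSpos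
      nlinarith [this, hcz, hA2]
    

-- values of a span≤1 vector
lemma nbr_vals {n : ℕ} (hn : 2 ≤ n) (k : ℤ) (N : Fin n → ℤ) (hsum : ∑ i, N i = k)
    (hspan : ∀ i j, N j ≤ N i + 1) : ∀ i, N i = k / n ∨ N i = k / n + 1 := by
  intro i
  set d := k / (n:ℤ) with hd
  have hn0 : (0:ℤ) < (n:ℤ) := by exact_mod_cast (by omega : 0 < n)
  have hdr : (n:ℤ) * d + k % n = k := Int.mul_ediv_add_emod k n
  have hr0 : 0 ≤ k % n := Int.emod_nonneg k (by omega)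
  have hrn : k % n < n := Int.emod_lt_of_pos k hn0
  by_contra hcon
  push_neg at hcon
  have hsplit : N i ≤ d - 1 ∨ d + 2 ≤ N i := by omega
  have huniv : (Finset.univ : Finset (Fin n)).card = n := by simp
  rcases hsplit with h | h
  · have hle : ∑ j, N j ≤ ∑ j : Fin n, (if j = i then d - 1 else d) := by
      apply Finset.sum_le_sum
      intro j _
      by_cases hj : j = i
      · rw [if_pos hj, hj]; omega
      · rw [if_neg hj]
        have := hspan i j; omega
    have hcalc : ∑ j : Fin n, (if j = i then d - 1 else d) = (n:ℤ) * d - 1 := by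
      have he : ∀ j : Fin n, (if j = i then d - 1 else d) = d - (if j = i then 1 else 0) := by
        intro j; split_ifs <;> ring
      rw [Finset.sum_congr rfl fun j _ => he j, Finset.sum_sub_distrib, Finset.sum_const,
        Finset.sum_ite_eq' Finset.univ i (fun _ => (1:ℤ)), huniv]
      simp [mul_comm]
    rw [hsum, hcalc] at hle
    omega
  · have hle : ∑ j : Fin n, (if j = i then d + 2 else d + 1) ≤ ∑ j, N j := by
      apply Finset.sum_le_sum
      intro j _
      by_cases hj : j = i
      · rw [if_pos hj, hj]; omega
      · rw [if_neg hj]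
        have := hspan j i; omega
    have hcalc : ∑ j : Fin n, (if j = i then d + 2 else d + 1) = (n:ℤ) * d + (n:ℤ) + 1 := by
      have he : ∀ j : Fin n, (if j = i then d + 2 else d + 1)
          = (d+1) + (if j = i then 1 else 0) := by
        intro j; split_ifs <;> ring
      rw [Finset.sum_congr rfl fun j _ => he j, Finset.sum_add_distrib, Finset.sum_const,
        Finset.sum_ite_eq' Finset.univ i (fun _ => (1:ℤ)), huniv]
      simp only [Finset.mem_univ, if_true, nsmul_eq_mul]
      ring
    rw [hsum, hcalc] at hle
    omega

-- sum of squares of a span≤1 vector is the minimum value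
lemma nbr_sq {n : ℕ} (hn : 2 ≤ n) (k : ℤ) (N : Fin n → ℤ) (hsum : ∑ i, N i = k)
    (hvals : ∀ i, N i = k / n ∨ N i = k / n + 1) :
    ∑ i, (N i)^2 = k % n + 2 * (k / n) * k - n * (k / n)^2 := by
  set d := k / (n:ℤ) with hd
  have hn0 : (0:ℤ) < (n:ℤ) := by exact_mod_cast (by omega : 0 < n)
  have hdr : (n:ℤ) * d + k % n = k := Int.mul_ediv_add_emod k n
  have hsq : ∀ i, (N i - d)^2 = N i - d := by
    intro i
    rcases hvals i with h | h <;> rw [h] <;> ring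
  have h1 : ∑ i, (N i - d)^2 = ∑ i, (N i - d) :=
    Finset.sum_congr rfl (fun i _ => hsq i)
  have h2 : ∑ i, (N i - d) = k - n * d := by
    rw [Finset.sum_sub_distrib, hsum, Finset.sum_const]
    simp [mul_comm]
  have h3 : ∑ i, (N i - d)^2 = ∑ i, (N i)^2 - 2 * d * k + n * d^2 := by
    have he : ∀ i, (N i - d)^2 = (N i)^2 - 2 * d * N i + d^2 := fun i => by ring
    rw [Finset.sum_congr rfl fun i _ => he i]
    rw [Finset.sum_add_distrib, Finset.sum_sub_distrib, Finset.sum_const, ← Finset.mul_sum,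
      hsum]
    simp [mul_comm]
  rw [h1, h2] at h3
  omega

-- lower bound for any integer vector with given sum
lemma sq_lower {n : ℕ} (hn : 2 ≤ n) (k : ℤ) (y : Fin n → ℤ) (hsum : ∑ i, y i = k) :
    k % n + 2 * (k / n) * k - n * (k / n)^2 ≤ ∑ i, (y i)^2 := by
  set d := k / (n:ℤ) with hd
  have hn0 : (0:ℤ) < (n:ℤ) := by exact_mod_cast (by omega : 0 < n)
  have hdr : (n:ℤ) * d + k % n = k := Int.mul_ediv_add_emod k n
  have hr0 : 0 ≤ k % n := Int.emod_nonneg k (by omega)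
  have habs : ∀ i, |y i - d| ≤ (y i - d)^2 := by
    intro i
    rcases eq_or_ne (y i - d) 0 with h | h
    · simp [h]
    · have h1 : 1 ≤ |y i - d| := Int.one_le_abs h
      calc |y i - d| = |y i - d| * 1 := by ring
        _ ≤ |y i - d| * |y i - d| := by
            apply mul_le_mul_of_nonneg_left h1 (abs_nonneg _)
        _ = (y i - d)^2 := by rw [← abs_mul, ← sq, abs_sq]
  have h1 : |∑ i, (y i - d)| ≤ ∑ i, |y i - d| := Finset.abs_sum_le_sum_abs _ _
  have h2 : ∑ i, |y i - d| ≤ ∑ i, (y i - d)^2 :=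
    Finset.sum_le_sum (fun i _ => habs i)
  have h3 : ∑ i, (y i - d) = k - n * d := by
    rw [Finset.sum_sub_distrib, hsum, Finset.sum_const]
    simp [mul_comm]
  have h4 : ∑ i, (y i - d)^2 = ∑ i, (y i)^2 - 2 * d * k + n * d^2 := by
    have he : ∀ i, (y i - d)^2 = (y i)^2 - 2 * d * y i + d^2 := fun i => by ring
    rw [Finset.sum_congr rfl fun i _ => he i]
    rw [Finset.sum_add_distrib, Finset.sum_sub_distrib, Finset.sum_const, ← Finset.mul_sum,
      hsum]
    simp [mul_comm]
  rw [h3] at h1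
  have h5 : k - n * d = k % n := by omega
  rw [h5, abs_of_nonneg hr0] at h1
  omega

-- real distance expression
lemma real_dist {n : ℕ} (hn : 2 ≤ n) (k : ℤ) (x : Fin n → ℤ) (hsum : ∑ i, x i = k) :
    ∑ i, ((x i : ℝ) - (k:ℝ)/n)^2 = ((∑ i, (x i)^2 : ℤ) : ℝ) - (k:ℝ)^2/n := by
  have hn0 : (0:ℝ) < (n:ℝ) := by exact_mod_cast (by omega : 0 < n)
  have hsR : ∑ i, (x i : ℝ) = (k:ℝ) := by exact_mod_cast congrArg (Int.cast : ℤ → ℝ) hsum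
  have he : ∀ i, ((x i : ℝ) - (k:ℝ)/n)^2
      = (x i:ℝ)^2 - 2*((k:ℝ)/n)*(x i:ℝ) + ((k:ℝ)/n)^2 := fun i => by ring
  rw [Finset.sum_congr rfl fun i _ => he i, Finset.sum_add_distrib, Finset.sum_sub_distrib,
    Finset.sum_const, ← Finset.mul_sum, hsR]
  have hcard : (Finset.univ : Finset (Fin n)).card = n := by simp
  rw [hcard]
  push_cast
  field_simp
  have hnn : (n:ℝ)^2 * (n:ℝ)⁻¹^2 = 1 := by rw [← mul_pow, mul_inv_cancel₀ (ne_of_gt hn0), one_pow]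
  linear_combination (k:ℝ)^2 * hnn

/-- Let `n ≥ 2`, `X ⊆ ℝⁿ` convex and invariant under a group `G` acting
`(⌊n/2⌋+1)`-transitively on the coordinates. Then for every `k ∈ ℤ`, the `k`-th layer
contains a point of `X ∩ ℤⁿ` iff some neighbor of the `k`-th layer lies in `X`. -/
theorem layer_feasible_iff_neighbor_feasible (n : ℕ) (hn : 2 ≤ n)
    (X : Set (Fin n → ℝ)) (hX : Convex ℝ X) (G : Subgroup (Equiv.Perm (Fin n)))
    (hinv : ∀ g ∈ G, (fun x : Fin n → ℝ => fun i => x (g⁻¹ i)) '' X = X)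
    (htrans : ∀ f₁ f₂ : Fin (n / 2 + 1) → Fin n,
      Function.Injective f₁ → Function.Injective f₂ →
      ∃ g ∈ G, ∀ j, g (f₁ j) = f₂ j) :
    ∀ k : ℤ,
      (∃ x : Fin n → ℤ, (fun i => (x i : ℝ)) ∈ X ∧ ∑ i, x i = k) ↔
      (∃ N : Fin n → ℤ, (∑ i, N i = k ∧
          ∀ y : Fin n → ℤ, ∑ i, y i = k →
            ∑ i, ((N i : ℝ) - (k : ℝ) / n) ^ 2 ≤ ∑ i, ((y i : ℝ) - (k : ℝ) / n) ^ 2) ∧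
        (fun i => (N i : ℝ)) ∈ X) := by
  intro k
  constructor
  · rintro ⟨x, hxX, hxsum⟩
    -- descent to a span ≤ 1 point
    have hdesc : ∀ M : ℕ, ∀ z : Fin n → ℤ, (∑ i, (z i)^2).toNat < M →
        (fun i => (z i : ℝ)) ∈ X → ∑ i, z i = k →
        ∃ N : Fin n → ℤ, (fun i => (N i : ℝ)) ∈ X ∧ ∑ i, N i = k ∧ ∀ i j, N j ≤ N i + 1 := by
      intro M
      induction M with
      | zero => intro z h; exact absurd h (Nat.not_lt_zero _)
      | succ M ih =>
        intro z hM hzX hzsum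
        by_cases hsp : ∃ i j, z i + 2 ≤ z j
        · obtain ⟨w, hwX, hws, hwlt⟩ := step hn X hX G hinv htrans z hzX hsp
          have h0 : 0 ≤ ∑ i, (w i)^2 := Finset.sum_nonneg fun i _ => sq_nonneg _
          exact ih w (by omega) hwX (hws.trans hzsum)
        · push_neg at hsp
          exact ⟨z, hzX, hzsum, fun i j => by have := hsp i j; omega⟩
    obtain ⟨N, hNX, hNsum, hNspan⟩ :=
      hdesc ((∑ i, (x i)^2).toNat + 1) x (by omega) hxX hxsum
    refine ⟨N, ⟨hNsum, ?_⟩, hNX⟩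
    intro y hysum
    rw [real_dist hn k N hNsum, real_dist hn k y hysum]
    have hle : ∑ i, (N i)^2 ≤ ∑ i, (y i)^2 := by
      rw [nbr_sq hn k N hNsum (nbr_vals hn k N hNsum hNspan)]
      exact sq_lower hn k y hysum
    have : ((∑ i, (N i)^2 : ℤ) : ℝ) ≤ ((∑ i, (y i)^2 : ℤ) : ℝ) := by exact_mod_cast hle
    linarith
  · rintro ⟨N, ⟨hNsum, _⟩, hNX⟩
    exact ⟨N, hNX, hNsum⟩
end

section
/- Let G ≤ S_n act k-homogeneously on {1,…,n}, where k ∈ {1,…,⌊n/2⌋}. Then for every d ∈ ℤ and every r ∈ {0,…,k} ∪ {n−k,…,n−1}, the group G acts transitively on the set of neighbors 𝒩_{r+nd}: for any two neighbors N, N' ∈ 𝒩_{r+nd} there exists g ∈ G with N^g = N'. -/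
open scoped BigOperators

open Finset in
/-- The "up" operator on functions on subsets of `Fin n`. -/
private def Uop {n : ℕ} (f : Finset (Fin n) → ℚ) : Finset (Fin n) → ℚ :=
  fun K => ∑ i ∈ K, f (K.erase i)

open Finset in
/-- The "down" operator on functions on subsets of `Fin n`. -/
private def Dop {n : ℕ} (f : Finset (Fin n) → ℚ) : Finset (Fin n) → ℚ :=
  fun S => ∑ i ∈ Sᶜ, f (insert i S)

section Ops
open Finset
variable {n : ℕ}

lemma adj (f g : Finset (Fin n) → ℚ) :
    ∑ K : Finset (Fin n), Uop f K * g K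
      = ∑ S : Finset (Fin n), f S * Dop g S := by
  simp only [Uop, Dop, Finset.sum_mul, Finset.mul_sum]
  rw [Finset.sum_sigma' , Finset.sum_sigma']
  refine Finset.sum_nbij' (fun p => ⟨p.1.erase p.2, p.2⟩) (fun p => ⟨insert p.2 p.1, p.2⟩)
    ?_ ?_ ?_ ?_ ?_
  · rintro ⟨K, i⟩ h
    simp only [mem_sigma, mem_univ, true_and] at h ⊢
    simp [h]
  · rintro ⟨S, i⟩ h
    simp only [mem_sigma, mem_univ, true_and, mem_compl] at h ⊢
    simp [h]
  · rintro ⟨K, i⟩ h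
    simp only [mem_sigma, mem_univ, true_and] at h
    simp [Finset.insert_erase h]
  · rintro ⟨S, i⟩ h
    simp only [mem_sigma, mem_univ, true_and, mem_compl] at h
    simp [Finset.erase_insert h]
  · rintro ⟨K, i⟩ h
    simp only [mem_sigma, mem_univ, true_and] at h
    simp [Finset.insert_erase h]

lemma commDU (f : Finset (Fin n) → ℚ) (S : Finset (Fin n)) :
    Dop (Uop f) S = Uop (Dop f) S + ((n : ℚ) - 2 * S.card) * f S := by
  have hDU : Dop (Uop f) S
      = ((n : ℚ) - S.card) * f S + ∑ i ∈ Sᶜ, ∑ j ∈ S, f (insert i (S.erase j)) := by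
    unfold Dop Uop
    have : ∀ i ∈ Sᶜ, ∑ j ∈ insert i S, f ((insert i S).erase j)
        = f S + ∑ j ∈ S, f (insert i (S.erase j)) := by
      intro i hi
      rw [mem_compl] at hi
      rw [Finset.sum_insert hi, Finset.erase_insert hi]
      congr 1
      refine Finset.sum_congr rfl fun j hj => ?_
      rw [Finset.erase_insert_of_ne]
      rintro rfl; exact hi hj
    rw [Finset.sum_congr rfl this, Finset.sum_add_distrib, Finset.sum_const, nsmul_eq_mul]
    congr 2
    rw [Finset.card_compl]
    push_cast [Finset.card_le_univ S]
    simp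
  have hUD : Uop (Dop f) S
      = (S.card : ℚ) * f S + ∑ j ∈ S, ∑ i ∈ Sᶜ, f (insert i (S.erase j)) := by
    unfold Dop Uop
    have : ∀ j ∈ S, ∑ i ∈ (S.erase j)ᶜ, f (insert i (S.erase j))
        = f S + ∑ i ∈ Sᶜ, f (insert i (S.erase j)) := by
      intro j hj
      rw [Finset.compl_erase, Finset.sum_insert (by simp [hj]), Finset.insert_erase hj]
    rw [Finset.sum_congr rfl this, Finset.sum_add_distrib, Finset.sum_const, nsmul_eq_mul]
  rw [hDU, hUD, Finset.sum_comm]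
  ring

lemma Uop_inj (f : Finset (Fin n) → ℚ) (j : ℕ)
    (hsupp : ∀ S : Finset (Fin n), S.card ≠ j → f S = 0) (hj : 2 * j < n)
    (hU : ∀ K, Uop f K = 0) : ∀ S, f S = 0 := by
  have h0 : (0:ℚ) = ∑ S : Finset (Fin n), Dop f S * Dop f S
      + ((n : ℚ) - 2 * j) * ∑ S : Finset (Fin n), f S * f S := by
    have e1 : ∑ K : Finset (Fin n), Uop f K * Uop f K = 0 := by
      simp [hU]
    rw [adj] at e1
    have e2 : ∀ S : Finset (Fin n), f S * Dop (Uop f) S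
        = f S * Uop (Dop f) S + ((n:ℚ) - 2*j) * (f S * f S) := by
      intro S
      by_cases h : f S = 0
      · simp [h]
      · have hc : S.card = j := by by_contra hc; exact h (hsupp S hc)
        rw [commDU, hc]; ring
    rw [Finset.sum_congr rfl fun S _ => e2 S, Finset.sum_add_distrib] at e1
    have e3 : ∑ S : Finset (Fin n), f S * Uop (Dop f) S
        = ∑ S : Finset (Fin n), Dop f S * Dop f S := by
      have := adj (Dop f) f
      calc ∑ S : Finset (Fin n), f S * Uop (Dop f) S
          = ∑ S : Finset (Fin n), Uop (Dop f) S * f S := by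
            exact Finset.sum_congr rfl fun S _ => mul_comm _ _
        _ = _ := this
    rw [e3, ← Finset.mul_sum] at e1
    linarith [e1]
  have hA : (0:ℚ) ≤ ∑ S : Finset (Fin n), Dop f S * Dop f S :=
    Finset.sum_nonneg fun S _ => mul_self_nonneg _
  have hB : (0:ℚ) ≤ ∑ S : Finset (Fin n), f S * f S :=
    Finset.sum_nonneg fun S _ => mul_self_nonneg _
  have hc : (0:ℚ) < (n : ℚ) - 2 * j := by
    have : (2*j : ℚ) < n := by exact_mod_cast hj
    linarith
  have hzero : ∑ S : Finset (Fin n), f S * f S = 0 := by nlinarith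
  intro S
  have := (Finset.sum_eq_zero_iff_of_nonneg (fun S _ => mul_self_nonneg (f S))).mp hzero S
    (Finset.mem_univ S)
  exact mul_self_eq_zero.mp this

lemma sum_Uop (f : Finset (Fin n) → ℚ) :
    ∑ K : Finset (Fin n), Uop f K = ∑ S : Finset (Fin n), ((n:ℚ) - S.card) * f S := by
  have := adj f (fun _ => 1)
  simp only [mul_one, Dop, Finset.sum_const, nsmul_eq_mul] at this
  rw [this]
  refine Finset.sum_congr rfl fun S _ => ?_
  rw [Finset.card_compl]
  rw [mul_comm]
  congr 1
  push_cast [Finset.card_le_univ S]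
  simp

lemma Uop_supp (f : Finset (Fin n) → ℚ) (j : ℕ)
    (hsupp : ∀ S : Finset (Fin n), S.card ≠ j → f S = 0) :
    ∀ K : Finset (Fin n), K.card ≠ j + 1 → Uop f K = 0 := by
  intro K hK
  refine Finset.sum_eq_zero fun i hi => ?_
  refine hsupp _ fun hc => hK ?_
  rw [Finset.card_erase_of_mem hi] at hc
  have : 1 ≤ K.card := Finset.card_pos.mpr ⟨i, hi⟩
  omega

lemma Uop_inv (G : Subgroup (Equiv.Perm (Fin n))) (f : Finset (Fin n) → ℚ)
    (hf : ∀ g ∈ G, ∀ S : Finset (Fin n), f (S.image g) = f S) :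
    ∀ g ∈ G, ∀ K : Finset (Fin n), Uop f (K.image g) = Uop f K := by
  intro g hg K
  unfold Uop
  rw [Finset.sum_image (fun a _ b _ h => g.injective h)]
  refine Finset.sum_congr rfl fun i hi => ?_
  rw [← Finset.image_erase g.injective]
  exact hf g hg _

lemma homog_down (k : ℕ) (hk2 : 2 * k ≤ n) (G : Subgroup (Equiv.Perm (Fin n)))
    (hhom : ∀ S T : Finset (Fin n), S.card = k → T.card = k → ∃ g ∈ G, S.image g = T)
    (r : ℕ) (hr : r ≤ k) :
    ∀ S T : Finset (Fin n), S.card = r → T.card = r → ∃ g ∈ G, S.image g = T := by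
  classical
  by_contra hcon
  push_neg at hcon
  obtain ⟨S, T, hS, hT, hST⟩ := hcon
  -- orbits
  set orb : Finset (Fin n) → Finset (Finset (Fin n)) :=
    fun A => univ.filter (fun B => ∃ g ∈ G, A.image g = B) with horb
  have hmem_orb : ∀ A B : Finset (Fin n), B ∈ orb A ↔ ∃ g ∈ G, A.image g = B := by
    intro A B; simp [horb]
  have hself : ∀ A, A ∈ orb A := by
    intro A
    rw [hmem_orb]
    exact ⟨1, one_mem G, by simp⟩
  have hcard_orb : ∀ A B, B ∈ orb A → B.card = A.card := by
    intro A B hB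
    rw [hmem_orb] at hB
    obtain ⟨g, _, rfl⟩ := hB
    exact Finset.card_image_of_injective _ g.injective
  have hinv_orb : ∀ A, ∀ g ∈ G, ∀ B : Finset (Fin n), (B.image g ∈ orb A ↔ B ∈ orb A) := by
    intro A g hg B
    rw [hmem_orb, hmem_orb]
    constructor
    · rintro ⟨h, hh, hB⟩
      refine ⟨g⁻¹ * h, mul_mem (inv_mem hg) hh, ?_⟩
      have : (A.image ⇑(g⁻¹ * h)) = (A.image ⇑h).image ⇑g⁻¹ := by
        simp [Finset.image_image, Function.comp_def]
      rw [this, hB, Finset.image_image]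
      simp [Function.comp_def]
    · rintro ⟨h, hh, hB⟩
      refine ⟨g * h, mul_mem hg hh, ?_⟩
      rw [← hB, Finset.image_image]
      simp [Function.comp_def]
  -- the test function
  set f : Finset (Fin n) → ℚ :=
    fun B => (if B ∈ orb S then ((orb S).card : ℚ)⁻¹ else 0)
      - (if B ∈ orb T then ((orb T).card : ℚ)⁻¹ else 0) with hf
  have horbS_pos : 0 < (orb S).card := Finset.card_pos.mpr ⟨S, hself S⟩
  have horbT_pos : 0 < (orb T).card := Finset.card_pos.mpr ⟨T, hself T⟩
  have hf_inv : ∀ g ∈ G, ∀ B : Finset (Fin n), f (B.image g) = f B := by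
    intro g hg B
    simp only [hf, hinv_orb S g hg B, hinv_orb T g hg B]
  have hf_supp : ∀ B : Finset (Fin n), B.card ≠ r → f B = 0 := by
    intro B hB
    have h1 : B ∉ orb S := fun h => hB (by rw [hcard_orb S B h, hS])
    have h2 : B ∉ orb T := fun h => hB (by rw [hcard_orb T B h, hT])
    simp [hf, h1, h2]
  have hf_sum : ∑ B : Finset (Fin n), f B = 0 := by
    simp only [hf, Finset.sum_sub_distrib]
    rw [Finset.sum_ite_mem, Finset.sum_ite_mem]
    simp only [Finset.univ_inter, Finset.sum_const, nsmul_eq_mul]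
    rw [mul_inv_cancel₀ (by exact_mod_cast horbS_pos.ne'),
        mul_inv_cancel₀ (by exact_mod_cast horbT_pos.ne')]
    ring
  have hf_ne : f S ≠ 0 := by
    have h2 : S ∉ orb T := by
      rw [hmem_orb]
      rintro ⟨g, hg, hgT⟩
      refine hST g⁻¹ (inv_mem hg) ?_
      rw [← hgT, Finset.image_image]
      simp [Function.comp_def]
    simp only [hf, hself S, if_pos, h2, if_neg, not_false_iff, sub_zero]
    exact inv_ne_zero (by exact_mod_cast horbS_pos.ne')
  -- iterate the up operator
  have key : ∀ m, m ≤ k - r →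
      (∀ g ∈ G, ∀ B : Finset (Fin n), (Uop^[m] f) (B.image g) = (Uop^[m] f) B) ∧
      (∀ B : Finset (Fin n), B.card ≠ r + m → (Uop^[m] f) B = 0) ∧
      (∑ B : Finset (Fin n), (Uop^[m] f) B = 0) ∧
      ¬(∀ B, (Uop^[m] f) B = 0) := by
    intro m
    induction m with
    | zero =>
      intro _
      refine ⟨hf_inv, by simpa using hf_supp, hf_sum, fun h => hf_ne (h S)⟩
    | succ m ih =>
      intro hm
      obtain ⟨ih1, ih2, ih3, ih4⟩ := ih (by omega)
      rw [Function.iterate_succ_apply']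
      refine ⟨Uop_inv G _ ih1, ?_, ?_, ?_⟩
      · intro B hB
        exact Uop_supp _ (r + m) ih2 B (by omega)
      · rw [sum_Uop]
        calc ∑ S : Finset (Fin n), ((n:ℚ) - S.card) * (Uop^[m] f) S
            = ∑ S : Finset (Fin n), ((n:ℚ) - (r + m)) * (Uop^[m] f) S := by
              refine Finset.sum_congr rfl fun B _ => ?_
              by_cases hB : B.card = r + m
              · rw [hB]; push_cast; ring
              · rw [ih2 B hB]; ring
          _ = ((n:ℚ) - (r+m)) * ∑ B : Finset (Fin n), (Uop^[m] f) B := by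
              rw [Finset.mul_sum]
          _ = 0 := by rw [ih3, mul_zero]
      · intro hz
        exact ih4 (Uop_inj _ (r + m) ih2 (by omega) hz)
  obtain ⟨h1, h2, h3, h4⟩ := key (k - r) le_rfl
  set F := Uop^[k - r] f with hF
  have hrk : r + (k - r) = k := by omega
  rw [hrk] at h2
  -- F is nonzero somewhere, at a set of card k
  push_neg at h4
  obtain ⟨B₀, hB₀⟩ := h4
  have hB₀card : B₀.card = k := by
    by_contra hc
    exact hB₀ (h2 B₀ hc)
  -- F is constant on card-k sets
  have hconst : ∀ K : Finset (Fin n), K.card = k → F K = F B₀ := by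
    intro K hK
    obtain ⟨g, hg, hgK⟩ := hhom B₀ K hB₀card hK
    rw [← hgK]
    exact h1 g hg B₀
  -- sum over all sets equals (#k-sets) * F B₀ = 0
  have : ∑ B : Finset (Fin n), F B
      = ∑ B ∈ univ.filter (fun B : Finset (Fin n) => B.card = k), F B := by
    rw [Finset.sum_filter]
    refine Finset.sum_congr rfl fun B _ => ?_
    by_cases hB : B.card = k
    · simp [hB]
    · simp [hB, h2 B hB]
  rw [this] at h3
  rw [Finset.sum_congr rfl (fun B hB => hconst B (Finset.mem_filter.mp hB).2),
    Finset.sum_const, nsmul_eq_mul] at h3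
  have hne : (univ.filter (fun B : Finset (Fin n) => B.card = k)).Nonempty :=
    ⟨B₀, Finset.mem_filter.mpr ⟨Finset.mem_univ _, hB₀card⟩⟩
  have := Finset.card_pos.mpr hne
  have : F B₀ = 0 := by
    rcases mul_eq_zero.mp h3 with h | h
    · exact absurd h (by positivity)
    · exact h
  exact hB₀ this

lemma image_compl {n : ℕ} (g : Equiv.Perm (Fin n)) (S : Finset (Fin n)) :
    Sᶜ.image g = (S.image g)ᶜ := by
  ext i
  simp only [Finset.mem_image, Finset.mem_compl]
  constructor
  · rintro ⟨a, ha, rfl⟩ ⟨b, hb, hba⟩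
    exact ha (g.injective hba ▸ hb)
  · intro h
    exact ⟨g⁻¹ i, fun hm => h ⟨g⁻¹ i, hm, by simp⟩, by simp⟩

end Ops

/-- If `G ≤ S_n` acts `k`-homogeneously on `{1,…,n}` with
`1 ≤ k ≤ ⌊n/2⌋`, then for every `d ∈ ℤ` and every `r ∈ {0,…,k} ∪ {n−k,…,n−1}`,
`G` acts transitively on the set of neighbors `𝒩_{r+nd}` (the integer vectors with
exactly `r` coordinates equal to `d+1` and `n−r` coordinates equal to `d`). -/
theorem transitive_on_neighbors (n k : ℕ) (hk1 : 1 ≤ k) (hk2 : k ≤ n / 2)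
    (G : Subgroup (Equiv.Perm (Fin n)))
    (hhom : ∀ S T : Finset (Fin n), S.card = k → T.card = k →
      ∃ g ∈ G, S.image g = T)
    (d : ℤ) (r : ℕ) (hr : r ≤ k ∨ (n - k ≤ r ∧ r ≤ n - 1)) :
    ∀ N N' : Fin n → ℤ,
      ((∀ i, N i = d ∨ N i = d + 1) ∧
        (Finset.univ.filter fun i => N i = d + 1).card = r) →
      ((∀ i, N' i = d ∨ N' i = d + 1) ∧
        (Finset.univ.filter fun i => N' i = d + 1).card = r) →
      ∃ g ∈ G, (fun i => N (g⁻¹ i)) = N' := by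
  classical
  intro N N' hN hN'
  have h2k : 2 * k ≤ n := by
    have := Nat.div_mul_le_self n 2
    omega
  set A : Finset (Fin n) := Finset.univ.filter (fun i => N i = d + 1) with hA
  set A' : Finset (Fin n) := Finset.univ.filter (fun i => N' i = d + 1) with hA'
  have hAc : A.card = r := hN.2
  have hA'c : A'.card = r := hN'.2
  -- get g with A.image g = A'
  have hmain : ∃ g ∈ G, A.image g = A' := by
    rcases hr with hr | ⟨hr1, hr2⟩
    · exact homog_down k h2k G hhom r hr A A' hAc hA'c
    · have hn1 : 1 ≤ n := by omega
      have hcompl : Aᶜ.card = n - r := by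
        rw [Finset.card_compl, hAc]; simp
      have hcompl' : A'ᶜ.card = n - r := by
        rw [Finset.card_compl, hA'c]; simp
      have hnr : n - r ≤ k := by omega
      obtain ⟨g, hg, hgA⟩ := homog_down k h2k G hhom (n - r) hnr Aᶜ A'ᶜ hcompl hcompl'
      refine ⟨g, hg, ?_⟩
      rw [image_compl] at hgA
      exact compl_injective hgA
  obtain ⟨g, hg, hgA⟩ := hmain
  refine ⟨g, hg, ?_⟩
  funext i
  have hiff : i ∈ A' ↔ g⁻¹ i ∈ A := by
    rw [← hgA, Finset.mem_image]
    constructor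
    · rintro ⟨a, ha, rfl⟩
      simpa using ha
    · intro h
      exact ⟨g⁻¹ i, h, by simp⟩
  rcases hN'.1 i with h' | h'
  · -- N' i = d, so i ∉ A'
    have hiA' : i ∉ A' := by
      rw [hA']
      simp only [Finset.mem_filter, Finset.mem_univ, true_and]
      omega
    have : g⁻¹ i ∉ A := fun h => hiA' (hiff.mpr h)
    rw [hA] at this
    simp only [Finset.mem_filter, Finset.mem_univ, true_and] at this
    rcases hN.1 (g⁻¹ i) with h | h
    · rw [h, h']
    · exact absurd h this
  · -- N' i = d + 1
    have hiA' : i ∈ A' := by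
      rw [hA']; simp [h']
    have : g⁻¹ i ∈ A := hiff.mp hiA'
    rw [hA] at this
    simp only [Finset.mem_filter, Finset.mem_univ, true_and] at this
    rw [this, h']
end

section
/- Let n ≥ 2, let X ⊆ ℝⁿ, and let G ≤ S_n act (⌊n/2⌋+1)-transitively on the coordinate indices {1,…,n} with X^g = X for all g ∈ G. Then for every k ∈ ℤ and every fixed neighbor N ∈ 𝒩_k: some neighbor of 𝒩_k lies in X if and only if N itself lies in X. -/
open scoped BigOperators

lemma exists_mem_iff_aux (n : ℕ) (hn : 2 ≤ n) (G : Subgroup (Equiv.Perm (Fin n)))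
    (htrans : ∀ f₁ f₂ : Fin (n / 2 + 1) → Fin n,
      Function.Injective f₁ → Function.Injective f₂ →
      ∃ g ∈ G, ∀ j, g (f₁ j) = f₂ j)
    (A B : Finset (Fin n)) (hAB : A.card = B.card) (hA : A.card ≤ n / 2) :
    ∃ g ∈ G, ∀ i, i ∈ B ↔ g⁻¹ i ∈ A := by
  set m := n / 2 + 1 with hm
  have hmn : m ≤ n := by omega
  have hAc : (m - A.card) ≤ Aᶜ.card := by
    rw [Finset.card_compl, Fintype.card_fin]; omega
  obtain ⟨C, hCsub, hCcard⟩ := Finset.exists_subset_card_eq hAc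
  have hdisj : Disjoint A C := by
    rw [Finset.disjoint_left]
    intro a ha haC
    exact (Finset.mem_compl.mp (hCsub haC)) ha
  have hcard : (A ∪ C).card = m := by
    rw [Finset.card_union_of_disjoint hdisj, hCcard]; omega
  set f₁ : Fin m → Fin n := fun j => ((A ∪ C).orderIsoOfFin hcard j : Fin n) with hf₁
  have hf₁inj : Function.Injective f₁ := fun a b hab => by
    have := Subtype.ext hab
    exact ((A ∪ C).orderIsoOfFin hcard).injective this
  have e : {x // x ∈ A} ≃ {x // x ∈ B} := Finset.equivOfCardEq hAB
  set π : Equiv.Perm (Fin n) := e.extendSubtype with hπ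
  set f₂ : Fin m → Fin n := fun j => π (f₁ j) with hf₂
  have hf₂inj : Function.Injective f₂ := fun a b hab => hf₁inj (π.injective hab)
  obtain ⟨g, hg, hgf⟩ := htrans f₁ f₂ hf₁inj hf₂inj
  have hmap : ∀ i ∈ A, g i ∈ B := by
    intro i hi
    have hiu : i ∈ A ∪ C := Finset.mem_union_left _ hi
    set j := ((A ∪ C).orderIsoOfFin hcard).symm ⟨i, hiu⟩ with hj
    have hfj : f₁ j = i := by
      show (((A ∪ C).orderIsoOfFin hcard) j : Fin n) = i
      rw [hj, OrderIso.apply_symm_apply]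
    have hgi := hgf j
    rw [hfj] at hgi
    rw [hgi]
    show π (f₁ j) ∈ B
    rw [hfj]
    exact e.extendSubtype_mem i hi
  have himg : A.image g = B := by
    apply Finset.eq_of_subset_of_card_le
    · intro b hb
      obtain ⟨a, ha, rfl⟩ := Finset.mem_image.mp hb
      exact hmap a ha
    · rw [Finset.card_image_of_injective _ (Equiv.injective g), hAB]
  refine ⟨g, hg, fun i => ?_⟩
  constructor
  · intro hi
    rw [← himg] at hi
    obtain ⟨a, ha, hai⟩ := Finset.mem_image.mp hi
    have : a = g⁻¹ i := by
      rw [← hai]; simp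
    rwa [← this]
  · intro hi
    rw [← himg]
    exact Finset.mem_image.mpr ⟨g⁻¹ i, hi, by simp⟩

lemma transfer_aux (n : ℕ) (hn : 2 ≤ n) (X : Set (Fin n → ℝ))
    (G : Subgroup (Equiv.Perm (Fin n)))
    (hinv : ∀ g ∈ G, (fun x : Fin n → ℝ => fun i => x (g⁻¹ i)) '' X = X)
    (htrans : ∀ f₁ f₂ : Fin (n / 2 + 1) → Fin n,
      Function.Injective f₁ → Function.Injective f₂ →
      ∃ g ∈ G, ∀ j, g (f₁ j) = f₂ j)
    (v w : ℤ) (hvw : v ≠ w) (N' N : Fin n → ℤ)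
    (h1 : ∀ i, N' i = w ∨ N' i = v) (h2 : ∀ i, N i = w ∨ N i = v)
    (hcard : (Finset.univ.filter fun i => N' i = v).card
      = (Finset.univ.filter fun i => N i = v).card)
    (hle : (Finset.univ.filter fun i => N' i = v).card ≤ n / 2)
    (hX : (fun i => (N' i : ℝ)) ∈ X) : (fun i => (N i : ℝ)) ∈ X := by
  obtain ⟨g, hg, hiff⟩ := exists_mem_iff_aux n hn G htrans _ _ hcard hle
  have hmem : (fun i => ((N' (g⁻¹ i) : ℤ) : ℝ)) ∈ X := by
    rw [← hinv g hg]
    exact ⟨_, hX, rfl⟩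
  have heq : (fun i => ((N' (g⁻¹ i) : ℤ) : ℝ)) = fun i => ((N i : ℤ) : ℝ) := by
    funext i
    have key : N' (g⁻¹ i) = N i := by
      have h := hiff i
      simp only [Finset.mem_filter, Finset.mem_univ, true_and] at h
      rcases h2 i with h2i | h2i
      · rcases h1 (g⁻¹ i) with h1i | h1i
        · rw [h1i, h2i]
        · exfalso
          have : N i = v := h.mpr h1i
          rw [h2i] at this
          exact hvw this.symm
      · rw [h2i]
        exact h.mp h2i
    rw [key]
  rwa [heq] at hmem

/-- Let `n ≥ 2`, `X ⊆ ℝⁿ` invariant under a group `G` acting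
`(⌊n/2⌋+1)`-transitively on the coordinates, and let `k = dn + r`. Then for any fixed
neighbor `N ∈ 𝒩_k`, some neighbor of `𝒩_k` lies in `X` iff `N` itself lies in `X`. -/
theorem one_neighbor_suffices (n : ℕ) (hn : 2 ≤ n) (X : Set (Fin n → ℝ))
    (G : Subgroup (Equiv.Perm (Fin n)))
    (hinv : ∀ g ∈ G, (fun x : Fin n → ℝ => fun i => x (g⁻¹ i)) '' X = X)
    (htrans : ∀ f₁ f₂ : Fin (n / 2 + 1) → Fin n,
      Function.Injective f₁ → Function.Injective f₂ →
      ∃ g ∈ G, ∀ j, g (f₁ j) = f₂ j)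
    (d : ℤ) (r : ℕ) (hr : r < n) (N : Fin n → ℤ)
    (hN : (∀ i, N i = d ∨ N i = d + 1) ∧
      (Finset.univ.filter fun i => N i = d + 1).card = r) :
    (∃ N' : Fin n → ℤ,
        ((∀ i, N' i = d ∨ N' i = d + 1) ∧
          (Finset.univ.filter fun i => N' i = d + 1).card = r) ∧
        (fun i => (N' i : ℝ)) ∈ X) ↔
      (fun i => (N i : ℝ)) ∈ X := by
  obtain ⟨hN1, hN2⟩ := hN
  constructor
  · rintro ⟨N', ⟨hN'1, hN'2⟩, hN'X⟩
    -- case split on r ≤ n/2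
    by_cases hcase : r ≤ n / 2
    · exact transfer_aux n hn X G hinv htrans (d+1) d (by omega) N' N hN'1 hN1
        (by rw [hN'2, hN2]) (by rw [hN'2]; exact hcase) hN'X
    · -- use value d
      have hcompl : ∀ (M : Fin n → ℤ), (∀ i, M i = d ∨ M i = d + 1) →
          (Finset.univ.filter fun i => M i = d + 1).card = r →
          (Finset.univ.filter fun i => M i = d).card = n - r := by
        intro M hM hMr
        have : (Finset.univ.filter fun i => M i = d) =
            (Finset.univ.filter fun i => ¬ M i = d + 1) := by
          apply Finset.filter_congr
          intro i _
          rcases hM i with h | h <;> simp [h] <;> omega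
        rw [this, Finset.filter_not, Finset.card_sdiff_of_subset (Finset.filter_subset _ _),
          hMr, Finset.card_univ, Fintype.card_fin]
      exact transfer_aux n hn X G hinv htrans d (d+1) (by omega) N' N
        (fun i => (hN'1 i).symm) (fun i => (hN1 i).symm)
        (by rw [hcompl N' hN'1 hN'2, hcompl N hN1 hN2])
        (by rw [hcompl N' hN'1 hN'2]; omega) hN'X
  · intro h
    exact ⟨N, ⟨hN1, hN2⟩, h⟩
end

section
/- Let n ≥ 5, let X ⊆ ℝⁿ be a convex set invariant under every even permutation of coordinates (i.e., X^g = X for all g in the alternating group A_n), and let a ∈ ℝ be such that the point (a,…,a)ᵀ lies in X and maximizes x ↦ ∑ᵢ xᵢ over X. For each integer k with n⌊a⌋ ≤ k ≤ ⌊na⌋, write k = n⌊a⌋ + r and let N_k ∈ ℤⁿ be the point whose first r coordinates equal ⌊a⌋+1 and whose remaining n−r coordinates equal ⌊a⌋. Then: (1) X contains an integer point if and only if N_k ∈ X for some integer k with n⌊a⌋ ≤ k ≤ ⌊na⌋; and (2) if k* is the largest such k with N_{k*} ∈ X, then N_{k*} maximizes x ↦ ∑ᵢ xᵢ over X ∩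 ℤⁿ. In particular, testing the at most n + 1 points N_{⌊na⌋}, …, N_{n⌊a⌋} either produces an optimal solution of the integer program or reveals its infeasibility. -/
open scoped BigOperators

lemma swap_val_eq {n : ℕ} (v : Fin n → ℤ) (i j : Fin n) (hv : v i = v j) :
    ∀ m, v (Equiv.swap i j m) = v m := by
  intro m
  rcases eq_or_ne m i with rfl | hmi
  · rw [Equiv.swap_apply_left]; exact hv.symm
  rcases eq_or_ne m j with rfl | hmj
  · rw [Equiv.swap_apply_right]; exact hv
  · rw [Equiv.swap_apply_of_ne_of_ne hmi hmj]

lemma exists_even_perm {n : ℕ} (v : Fin n → ℤ) (σ : Equiv.Perm (Fin n))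
    (i j : Fin n) (hij : i ≠ j) (hv : v i = v j) :
    ∃ g ∈ alternatingGroup (Fin n), ∀ k, v (g⁻¹ k) = v (σ⁻¹ k) := by
  by_cases hσ : σ ∈ alternatingGroup (Fin n)
  · exact ⟨σ, hσ, fun k => rfl⟩
  · refine ⟨σ * Equiv.swap i j, ?_, ?_⟩
    · rw [Equiv.Perm.mem_alternatingGroup] at hσ ⊢
      rw [map_mul, Equiv.Perm.sign_swap hij]
      rcases Int.units_eq_one_or (Equiv.Perm.sign σ) with h | h
      · exact absurd h hσ
      · rw [h]; decide
    · intro k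
      rw [mul_inv_rev, Equiv.swap_inv, Equiv.Perm.mul_apply]
      exact swap_val_eq v i j hv _

lemma exists_perm_map {n : ℕ} (S T : Finset (Fin n)) (h : S.card = T.card) :
    ∃ σ : Equiv.Perm (Fin n), ∀ k, k ∈ S ↔ σ k ∈ T := by
  have h1 : Fintype.card {x // x ∈ S} = Fintype.card {x // x ∈ T} := by
    simp [Fintype.card_coe, h]
  have h2 : Fintype.card {x // ¬ x ∈ S} = Fintype.card {x // ¬ x ∈ T} := by
    rw [Fintype.card_subtype_compl, Fintype.card_subtype_compl]
    simp [Fintype.card_coe, h]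
  let e1 := Fintype.equivOfCardEq h1
  let e2 := Fintype.equivOfCardEq h2
  refine ⟨(Equiv.sumCompl (· ∈ S)).symm.trans ((e1.sumCongr e2).trans
    (Equiv.sumCompl (· ∈ T))), fun k => ?_⟩
  by_cases hk : k ∈ S
  · simp only [Equiv.trans_apply, Equiv.sumCompl_symm_apply_of_pos hk,
      Equiv.sumCongr_apply, Sum.map_inl, Equiv.sumCompl_apply_inl]
    exact iff_of_true hk (e1 ⟨k, hk⟩).2
  · simp only [Equiv.trans_apply, Equiv.sumCompl_symm_apply_of_neg hk,
      Equiv.sumCongr_apply, Sum.map_inr, Equiv.sumCompl_apply_inr]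
    exact iff_of_false hk (e2 ⟨k, hk⟩).2

lemma card_filter_lt {n k : ℕ} (hk : k ≤ n) :
    (Finset.univ.filter fun i : Fin n => (i : ℕ) < k).card = k := by
  have : (Finset.univ.filter fun i : Fin n => (i : ℕ) < k)
      = Finset.univ.image (Fin.castLE hk) := by
    ext x
    simp only [Finset.mem_filter, Finset.mem_univ, true_and, Finset.mem_image]
    constructor
    · intro hx; exact ⟨⟨(x : ℕ), hx⟩, rfl⟩
    · rintro ⟨y, rfl⟩; exact y.2
  rw [this, Finset.card_image_of_injective _ (Fin.castLE_injective hk), Finset.card_univ,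
    Fintype.card_fin]

lemma sum_if_lt {n k : ℕ} (hk : k ≤ n) (b : ℤ) :
    ∑ i : Fin n, (if (i : ℕ) < k then b + 1 else b) = n * b + k := by
  have h1 : ∀ i : Fin n, (if (i : ℕ) < k then b + 1 else b)
      = b + (if (i : ℕ) < k then 1 else 0) := by
    intro i; split <;> ring
  rw [Finset.sum_congr rfl (fun i _ => h1 i), Finset.sum_add_distrib, Finset.sum_const,
    Finset.card_univ, Fintype.card_fin, Finset.sum_boole, card_filter_lt hk, nsmul_eq_mul]

lemma sum_update_pair {n : ℕ} (z : Fin n → ℤ) (i j : Fin n) (hij : i ≠ j) (a b : ℤ) :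
    ∑ k, Function.update (Function.update z i a) j b k
      = (∑ k, z k) + a + b - z i - z j := by
  have hi : i ∈ Finset.univ.erase j := Finset.mem_erase.mpr ⟨hij, Finset.mem_univ i⟩
  rw [Finset.sum_update_of_mem (Finset.mem_univ j), Finset.sdiff_singleton_eq_erase,
    Finset.sum_update_of_mem hi, Finset.sdiff_singleton_eq_erase,
    Finset.sum_erase_eq_sub hi, Finset.sum_erase_eq_sub (Finset.mem_univ j)]
  ring

lemma even_move {n : ℕ} (hn : 3 ≤ n) (i i' : Fin n) :
    ∃ σ : Equiv.Perm (Fin n), σ ∈ alternatingGroup (Fin n) ∧ σ i = i' := by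
  classical
  rcases eq_or_ne i i' with rfl | hne
  · exact ⟨1, one_mem _, rfl⟩
  · have hcard : ({i, i'} : Finset (Fin n)) ≠ Finset.univ := by
      intro h
      have h2 : ({i, i'} : Finset (Fin n)).card ≤ 2 :=
        (Finset.card_insert_le _ _).trans (by simp)
      rw [h, Finset.card_univ, Fintype.card_fin] at h2
      omega
    obtain ⟨m, hm⟩ := not_forall.mp (fun h => hcard (Finset.eq_univ_iff_forall.mpr h))
    simp only [Finset.mem_insert, Finset.mem_singleton, not_or] at hm
    refine ⟨Equiv.swap i m * Equiv.swap i i', ?_, ?_⟩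
    · rw [Equiv.Perm.mem_alternatingGroup, map_mul, Equiv.Perm.sign_swap (fun h => hm.1 h.symm),
        Equiv.Perm.sign_swap hne]
      decide
    · rw [Equiv.Perm.mul_apply, Equiv.swap_apply_left,
        Equiv.swap_apply_of_ne_of_ne hne.symm (fun h => hm.2 h.symm)]

lemma const_mem {n : ℕ} (hn : 3 ≤ n) (X : Set (Fin n → ℝ)) (hX : Convex ℝ X)
    (hmem : ∀ g ∈ alternatingGroup (Fin n), ∀ x ∈ X, (fun i => x (g⁻¹ i)) ∈ X)
    (y : Fin n → ℝ) (hy : y ∈ X) (b : ℝ) (hsum : ∑ i, y i = n * b) :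
    (fun _ : Fin n => b) ∈ X := by
  classical
  have hn0 : (0:ℝ) < n := by positivity
  set A := alternatingGroup (Fin n) with hA
  set c : ℕ := Fintype.card A with hc
  have hc0 : 0 < c := Fintype.card_pos
  set S : Fin n → ℝ := fun i => ∑ g : A, y ((g : Equiv.Perm (Fin n))⁻¹ i) with hS
  have hSconst : ∀ i i' : Fin n, S i' = S i := by
    intro i i'
    obtain ⟨σ, hσA, hσi⟩ := even_move hn i i'
    have hinv : σ⁻¹ i' = i := by rw [← hσi, Equiv.Perm.inv_def, Equiv.symm_apply_apply]
    refine Fintype.sum_equiv (Equiv.mulLeft ((⟨σ, hσA⟩ : A)⁻¹)) _ _ ?_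
    intro g
    have h2 : ((((⟨σ, hσA⟩ : A)⁻¹ * g) : A) : Equiv.Perm (Fin n))⁻¹ i = (g : Equiv.Perm (Fin n))⁻¹ i' := by
      simp only [Subgroup.coe_mul, mul_inv_rev, Equiv.Perm.mul_apply, InvMemClass.coe_inv,
        inv_inv]
      rw [hσi]
    simp only [Equiv.coe_mulLeft, h2]
  have hStot : ∀ i : Fin n, (n : ℝ) * S i = (c : ℝ) * ((n : ℝ) * b) := by
    intro i
    have h1 : ∑ i' : Fin n, S i' = (n : ℝ) * S i := by
      rw [Finset.sum_congr rfl (fun i' _ => hSconst i i'), Finset.sum_const, Finset.card_univ,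
        Fintype.card_fin, nsmul_eq_mul]
    have h2 : ∑ i' : Fin n, S i' = (c : ℝ) * ((n : ℝ) * b) := by
      rw [hS]
      rw [Finset.sum_comm]
      have : ∀ g : A, ∑ i' : Fin n, y ((g : Equiv.Perm (Fin n))⁻¹ i') = (n:ℝ) * b := by
        intro g
        rw [Equiv.sum_comp ((g : Equiv.Perm (Fin n))⁻¹ : Equiv.Perm (Fin n)) y, hsum]
      rw [Finset.sum_congr rfl (fun g _ => this g), Finset.sum_const, Finset.card_univ, ← hc,
        nsmul_eq_mul]
    rw [← h1, h2]
  have hSval : ∀ i, S i = (c : ℝ) * b := by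
    intro i
    have h := hStot i
    have h2 : (n:ℝ) * S i = (n:ℝ) * ((c:ℝ) * b) := by rw [h]; ring
    exact mul_left_cancel₀ (ne_of_gt hn0) h2
  set P : Fin n → ℝ := ∑ g : A, ((c : ℝ))⁻¹ • (fun k => y ((g : Equiv.Perm (Fin n))⁻¹ k)) with hP
  have hPX : P ∈ X := by
    refine hX.sum_mem (fun g _ => by positivity) ?_ (fun g _ => hmem _ g.2 y hy)
    rw [Finset.sum_const, Finset.card_univ, ← hc, nsmul_eq_mul]
    field_simp
  have hPb : P = fun _ : Fin n => b := by
    funext k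
    rw [hP, Finset.sum_apply]
    have : ∀ g : A, (((c:ℝ))⁻¹ • (fun k => y ((g : Equiv.Perm (Fin n))⁻¹ k))) k
        = (c:ℝ)⁻¹ * y ((g : Equiv.Perm (Fin n))⁻¹ k) := fun g => rfl
    rw [Finset.sum_congr rfl (fun g _ => this g), ← Finset.mul_sum]
    rw [show (∑ g : A, y ((g : Equiv.Perm (Fin n))⁻¹ k)) = S k from rfl, hSval]
    field_simp
  rw [← hPb]
  exact hPX

lemma sq_update {n : ℕ} (z : Fin n → ℤ) (i : Fin n) (a : ℤ) :
    (fun k => (Function.update z i a k)^2) = Function.update (fun k => z k ^ 2) i (a^2) := by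
  funext k
  rcases eq_or_ne k i with rfl | h
  · simp
  · simp [Function.update_of_ne h]

lemma four_distinct {n : ℕ} (F : Finset (Fin n)) (h4 : 4 ≤ F.card) :
    ∃ i j p q, i ∈ F ∧ j ∈ F ∧ p ∈ F ∧ q ∈ F ∧ i ≠ j ∧ p ≠ q ∧ i ≠ p ∧ i ≠ q ∧
      j ≠ p ∧ j ≠ q := by
  have h0 : 0 < F.card := by omega
  obtain ⟨i, hi⟩ := Finset.card_pos.mp h0
  have h3 : 0 < (F.erase i).card := by rw [Finset.card_erase_of_mem hi]; omega
  obtain ⟨j, hj⟩ := Finset.card_pos.mp h3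
  have h2 : 0 < ((F.erase i).erase j).card := by
    rw [Finset.card_erase_of_mem hj, Finset.card_erase_of_mem hi]; omega
  obtain ⟨p, hp⟩ := Finset.card_pos.mp h2
  have h1 : 0 < (((F.erase i).erase j).erase p).card := by
    rw [Finset.card_erase_of_mem hp, Finset.card_erase_of_mem hj,
      Finset.card_erase_of_mem hi]; omega
  obtain ⟨q, hq⟩ := Finset.card_pos.mp h1
  simp only [Finset.mem_erase] at hj hp hq
  exact ⟨i, j, p, q, hi, hj.2, hp.2.2, hq.2.2.2, fun h => hj.1 h.symm, fun h => hq.1 h.symm,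
    fun h => hp.2.1 h.symm, fun h => hq.2.2.1 h.symm, fun h => hp.1 h.symm,
    fun h => hq.2.1 h.symm⟩

lemma parity_pairs {n : ℕ} (hn : 5 ≤ n) (z : Fin n → ℤ) :
    ∃ i j p q : Fin n, i ≠ j ∧ p ≠ q ∧ i ≠ p ∧ i ≠ q ∧ j ≠ p ∧ j ≠ q ∧
      z i % 2 = z j % 2 ∧ z p % 2 = z q % 2 := by
  classical
  set S := Finset.univ.filter (fun i : Fin n => z i % 2 = 0) with hS
  have hparS : ∀ i ∈ S, z i % 2 = 0 := by
    intro i hi; simpa [hS] using (Finset.mem_filter.mp hi).2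
  have hparSc : ∀ i ∈ Sᶜ, z i % 2 = 1 := by
    intro i hi
    have := Finset.mem_compl.mp hi
    have h2 : ¬ (z i % 2 = 0) := fun h => this (Finset.mem_filter.mpr ⟨Finset.mem_univ i, h⟩)
    omega
  have hcompl : Sᶜ.card = n - S.card := by
    rw [Finset.card_compl, Fintype.card_fin]
  have hle : S.card ≤ n := by
    simpa [Fintype.card_fin] using Finset.card_le_univ S
  by_cases h2 : 2 ≤ S.card ∧ 2 ≤ Sᶜ.card
  · obtain ⟨i, hi, j, hj, hij⟩ := Finset.one_lt_card.mp (by omega : 1 < S.card)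
    obtain ⟨p, hp, q, hq, hpq⟩ := Finset.one_lt_card.mp (by omega : 1 < Sᶜ.card)
    refine ⟨i, j, p, q, hij, hpq, ?_, ?_, ?_, ?_, ?_, ?_⟩
    · intro h; subst h; exact Finset.mem_compl.mp hp hi
    · intro h; subst h; exact Finset.mem_compl.mp hq hi
    · intro h; subst h; exact Finset.mem_compl.mp hp hj
    · intro h; subst h; exact Finset.mem_compl.mp hq hj
    · rw [hparS i hi, hparS j hj]
    · rw [hparSc p hp, hparSc q hq]
  · have h4 : 4 ≤ S.card ∨ 4 ≤ Sᶜ.card := by omega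
    rcases h4 with h4 | h4
    · obtain ⟨i, j, p, q, hi, hj, hp, hq, hd⟩ := four_distinct S h4
      exact ⟨i, j, p, q, hd.1, hd.2.1, hd.2.2.1, hd.2.2.2.1, hd.2.2.2.2.1, hd.2.2.2.2.2,
        by rw [hparS i hi, hparS j hj], by rw [hparS p hp, hparS q hq]⟩
    · obtain ⟨i, j, p, q, hi, hj, hp, hq, hd⟩ := four_distinct Sᶜ h4
      exact ⟨i, j, p, q, hd.1, hd.2.1, hd.2.2.1, hd.2.2.2.1, hd.2.2.2.2.1, hd.2.2.2.2.2,
        by rw [hparSc i hi, hparSc j hj], by rw [hparSc p hp, hparSc q hq]⟩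

lemma one_le_sq {x : ℤ} (hx : x ≠ 0) : 1 ≤ x^2 := by
  rcases hx.lt_or_gt with h | h <;> nlinarith

lemma step_lemma {n : ℕ} (hn : 5 ≤ n) (X : Set (Fin n → ℝ)) (hX : Convex ℝ X)
    (hmem : ∀ g ∈ alternatingGroup (Fin n), ∀ x ∈ X, (fun i => x (g⁻¹ i)) ∈ X)
    (z : Fin n → ℤ) (hz : (fun i => (z i : ℝ)) ∈ X)
    (hne : ¬ ∀ i j, z i ≤ z j + 1) :
    ∃ w : Fin n → ℤ, (fun i => (w i : ℝ)) ∈ X ∧ ∑ i, w i = ∑ i, z i ∧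
      ∑ i, (w i)^2 < ∑ i, (z i)^2 := by
  classical
  push_neg at hne
  by_cases hdup : ∃ p q : Fin n, p ≠ q ∧ z p = z q
  · -- Case A : a repeated value exists
    obtain ⟨i, j, hij2⟩ := hne
    have hijne : i ≠ j := by intro h; subst h; omega
    obtain ⟨p, q, hpq, hzpq⟩ := hdup
    obtain ⟨g, hg, hgval⟩ := exists_even_perm z (Equiv.swap i j) p q hpq hzpq
    have hc2 : 2 ≤ z i - z j := by omega
    have hcR : (2:ℝ) ≤ ((z i : ℝ) - z j) := by
      have : ((2:ℤ) : ℝ) ≤ (((z i - z j) : ℤ) : ℝ) := by exact_mod_cast hc2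
      push_cast at this
      linarith
    have hc0 : ((z i : ℝ) - z j) ≠ 0 := by linarith
    set t : ℝ := ((z i : ℝ) - z j)⁻¹ with ht
    have ht0 : 0 < t := by rw [ht]; positivity
    have ht1 : t ≤ 1 := by rw [ht]; exact inv_le_one_of_one_le₀ (by linarith)
    have hy : (fun k => (z (g⁻¹ k) : ℝ)) ∈ X := hmem g hg _ hz
    set w : Fin n → ℤ := Function.update (Function.update z i (z i - 1)) j (z j + 1) with hw
    have hgk : ∀ k, z (g⁻¹ k) = z (Equiv.swap i j k) := by
      intro k
      have := hgval k
      rwa [Equiv.swap_inv] at this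
    have hkey : (fun k => (w k : ℝ))
        = (1 - t) • (fun k => (z k : ℝ)) + t • (fun k => (z (g⁻¹ k) : ℝ)) := by
      funext k
      simp only [Pi.add_apply, Pi.smul_apply, smul_eq_mul]
      rcases eq_or_ne k j with rfl | hkj
      · rw [hw, Function.update_self, hgk, Equiv.swap_apply_right, ht]
        push_cast
        field_simp
        ring
      rcases eq_or_ne k i with rfl | hki
      · rw [hw, Function.update_of_ne hkj, Function.update_self, hgk, Equiv.swap_apply_left, ht]
        push_cast
        field_simp
        ring
      · rw [hw, Function.update_of_ne hkj, Function.update_of_ne hki, hgk,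
          Equiv.swap_apply_of_ne_of_ne hki hkj]
        ring
    refine ⟨w, ?_, ?_, ?_⟩
    · rw [hkey]
      exact hX hz hy (by linarith) (le_of_lt ht0) (by ring)
    · rw [hw, sum_update_pair z i j hijne]; ring
    · have hsq : (fun k => (w k)^2)
          = Function.update (Function.update (fun k => z k ^ 2) i ((z i - 1)^2)) j
            ((z j + 1)^2) := by
        rw [hw]
        funext k
        rcases eq_or_ne k j with rfl | hkj
        · simp
        rcases eq_or_ne k i with rfl | hki
        · simp [Function.update_of_ne hkj]
        · simp [Function.update_of_ne hkj, Function.update_of_ne hki]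
      calc ∑ k, (w k)^2 = ∑ k, (fun k => (w k)^2) k := rfl
        _ = (∑ k, (z k)^2) + (z i - 1)^2 + (z j + 1)^2 - (z i)^2 - (z j)^2 := by
            rw [hsq, sum_update_pair (fun k => z k ^2) i j hijne]
        _ < ∑ k, (z k)^2 := by nlinarith
  · -- Case B : all values distinct
    push_neg at hdup
    obtain ⟨i, j, p, q, hij, hpq, hip, hiq, hjp, hjq, hpar1, hpar2⟩ := parity_pairs hn z
    have hzij : z i ≠ z j := hdup i j hij
    have hzpq : z p ≠ z q := hdup p q hpq
    obtain ⟨m, hm⟩ : ∃ m : ℤ, z i + z j = 2 * m := ⟨(z i + z j) / 2, by omega⟩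
    obtain ⟨m', hm'⟩ : ∃ m' : ℤ, z p + z q = 2 * m' := ⟨(z p + z q) / 2, by omega⟩
    set g : Equiv.Perm (Fin n) := Equiv.swap i j * Equiv.swap p q with hg
    have hgA : g ∈ alternatingGroup (Fin n) := by
      rw [Equiv.Perm.mem_alternatingGroup, hg, map_mul, Equiv.Perm.sign_swap hij,
        Equiv.Perm.sign_swap hpq]
      decide
    have hy : (fun k => (z (g⁻¹ k) : ℝ)) ∈ X := hmem g hgA _ hz
    have hginv : ∀ k, g⁻¹ k = Equiv.swap p q (Equiv.swap i j k) := by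
      intro k
      rw [hg, mul_inv_rev, Equiv.swap_inv, Equiv.swap_inv, Equiv.Perm.mul_apply]
    have hgi : z (g⁻¹ i) = z j := by
      rw [hginv, Equiv.swap_apply_left, Equiv.swap_apply_of_ne_of_ne hjp hjq]
    have hgj : z (g⁻¹ j) = z i := by
      rw [hginv, Equiv.swap_apply_right, Equiv.swap_apply_of_ne_of_ne hip hiq]
    have hgp : z (g⁻¹ p) = z q := by
      rw [hginv, Equiv.swap_apply_of_ne_of_ne (fun h => hip h.symm) (fun h => hjp h.symm),
        Equiv.swap_apply_left]
    have hgq : z (g⁻¹ q) = z p := by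
      rw [hginv, Equiv.swap_apply_of_ne_of_ne (fun h => hiq h.symm) (fun h => hjq h.symm),
        Equiv.swap_apply_right]
    set w : Fin n → ℤ :=
      Function.update (Function.update (Function.update (Function.update z i m) j m) p m') q m'
      with hw
    have hwq : w q = m' := by rw [hw, Function.update_self]
    have hwp : w p = m' := by
      rw [hw, Function.update_of_ne hpq, Function.update_self]
    have hwj : w j = m := by
      rw [hw, Function.update_of_ne hjq, Function.update_of_ne hjp, Function.update_self]
    have hwi : w i = m := by
      rw [hw, Function.update_of_ne hiq, Function.update_of_ne hip,
        Function.update_of_ne hij, Function.update_self]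
    have hwo : ∀ k, k ≠ i → k ≠ j → k ≠ p → k ≠ q → w k = z k := by
      intro k h1 h2 h3 h4
      rw [hw, Function.update_of_ne h4, Function.update_of_ne h3, Function.update_of_ne h2,
        Function.update_of_ne h1]
    have hkey : (fun k => (w k : ℝ))
        = (1/2 : ℝ) • (fun k => (z k : ℝ)) + (1/2 : ℝ) • (fun k => (z (g⁻¹ k) : ℝ)) := by
      funext k
      simp only [Pi.add_apply, Pi.smul_apply, smul_eq_mul]
      rcases eq_or_ne k i with hki | hki
      · rw [hki, hwi, hgi]
        have hcast : ((z i : ℝ) + z j) = 2 * m := by exact_mod_cast hm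
        linarith
      rcases eq_or_ne k j with hkj | hkj
      · rw [hkj, hwj, hgj]
        have hcast : ((z i : ℝ) + z j) = 2 * m := by exact_mod_cast hm
        linarith
      rcases eq_or_ne k p with hkp | hkp
      · rw [hkp, hwp, hgp]
        have hcast : ((z p : ℝ) + z q) = 2 * m' := by exact_mod_cast hm'
        linarith
      rcases eq_or_ne k q with hkq | hkq
      · rw [hkq, hwq, hgq]
        have hcast : ((z p : ℝ) + z q) = 2 * m' := by exact_mod_cast hm'
        linarith
      · have hgo : g⁻¹ k = k := by
          rw [hginv, Equiv.swap_apply_of_ne_of_ne hki hkj,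
            Equiv.swap_apply_of_ne_of_ne hkp hkq]
        rw [hwo k hki hkj hkp hkq, hgo]
        ring
    have him : z i ≠ m := by omega
    have hpm : z p ≠ m' := by omega
    have hup : Function.update (Function.update z i m) j m p = z p := by
      rw [Function.update_of_ne (fun h => hjp h.symm), Function.update_of_ne (fun h => hip h.symm)]
    have huq : Function.update (Function.update z i m) j m q = z q := by
      rw [Function.update_of_ne (fun h => hjq h.symm), Function.update_of_ne (fun h => hiq h.symm)]
    refine ⟨w, ?_, ?_, ?_⟩
    · rw [hkey]
      exact hX hz hy (by norm_num) (by norm_num) (by norm_num)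
    · rw [hw, sum_update_pair (Function.update (Function.update z i m) j m) p q hpq,
        sum_update_pair z i j hij, hup, huq]
      omega
    · have hsq : (fun k => (w k)^2)
          = Function.update (Function.update (Function.update (Function.update
              (fun k => z k ^ 2) i (m^2)) j (m^2)) p (m'^2)) q (m'^2) := by
        funext k
        rcases eq_or_ne k i with hki | hki
        · rw [hki, hwi, Function.update_of_ne hiq, Function.update_of_ne hip,
            Function.update_of_ne hij, Function.update_self]
        rcases eq_or_ne k j with hkj | hkj
        · rw [hkj, hwj, Function.update_of_ne hjq, Function.update_of_ne hjp,
            Function.update_self]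
        rcases eq_or_ne k p with hkp | hkp
        · rw [hkp, hwp, Function.update_of_ne hpq, Function.update_self]
        rcases eq_or_ne k q with hkq | hkq
        · rw [hkq, hwq, Function.update_self]
        · rw [hwo k hki hkj hkp hkq, Function.update_of_ne hkq, Function.update_of_ne hkp,
            Function.update_of_ne hkj, Function.update_of_ne hki]
      have hsqup : Function.update (Function.update (fun k => z k ^ 2) i (m^2)) j (m^2) p
          = z p ^ 2 := by
        rw [Function.update_of_ne (fun h => hjp h.symm), Function.update_of_ne (fun h => hip h.symm)]
      have hsquq : Function.update (Function.update (fun k => z k ^ 2) i (m^2)) j (m^2) q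
          = z q ^ 2 := by
        rw [Function.update_of_ne (fun h => hjq h.symm), Function.update_of_ne (fun h => hiq h.symm)]
      have h1 : 1 ≤ (z i - m)^2 := one_le_sq (by omega)
      have h2 : 1 ≤ (z p - m')^2 := one_le_sq (by omega)
      have e1 : z i ^2 + z j ^2 - 2*m^2 = 2*(z i - m)^2 := by
        rw [show z j = 2*m - z i by omega]; ring
      have e2 : z p ^2 + z q ^2 - 2*m'^2 = 2*(z p - m')^2 := by
        rw [show z q = 2*m' - z p by omega]; ring
      calc ∑ k, (w k)^2 = ∑ k, (fun k => (w k)^2) k := rfl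
        _ = ((∑ k, (z k)^2) + m^2 + m^2 - (z i)^2 - (z j)^2) + m'^2 + m'^2
            - z p ^2 - z q ^2 := by
            rw [hsq, sum_update_pair _ p q hpq, sum_update_pair _ i j hij, hsqup, hsquq]
        _ < ∑ k, (z k)^2 := by linarith [h1, h2, e1, e2]

lemma descent {n : ℕ} (hn : 5 ≤ n) (X : Set (Fin n → ℝ)) (hX : Convex ℝ X)
    (hmem : ∀ g ∈ alternatingGroup (Fin n), ∀ x ∈ X, (fun i => x (g⁻¹ i)) ∈ X) :
    ∀ m : ℕ, ∀ z : Fin n → ℤ, (∑ i, (z i)^2).toNat ≤ m → (fun i => (z i : ℝ)) ∈ X →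
    ∃ w : Fin n → ℤ, (fun i => (w i : ℝ)) ∈ X ∧ ∑ i, w i = ∑ i, z i ∧
      ∀ i j, w i ≤ w j + 1 := by
  intro m
  induction m with
  | zero =>
    intro z hz0 hzX
    by_cases hc : ∀ i j, z i ≤ z j + 1
    · exact ⟨z, hzX, rfl, hc⟩
    · exfalso
      obtain ⟨w, hwX, hws, hwφ⟩ := step_lemma hn X hX hmem z hzX hc
      have h0 : 0 ≤ ∑ i, (w i)^2 := Finset.sum_nonneg fun i _ => sq_nonneg _
      omega
  | succ m ih =>
    intro z hz0 hzX
    by_cases hc : ∀ i j, z i ≤ z j + 1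
    · exact ⟨z, hzX, rfl, hc⟩
    · obtain ⟨w, hwX, hws, hwφ⟩ := step_lemma hn X hX hmem z hzX hc
      have h0 : 0 ≤ ∑ i, (w i)^2 := Finset.sum_nonneg fun i _ => sq_nonneg _
      obtain ⟨w', h1, h2, h3⟩ := ih w (by omega) hwX
      exact ⟨w', h1, h2.trans hws, h3⟩

lemma sum_N {n : ℕ} (a : ℝ) (N : ℤ → Fin n → ℤ)
    (hN : ∀ k : ℤ, ∀ i : Fin n,
      N k i = if (i : ℕ) < (k - n * ⌊a⌋).toNat then ⌊a⌋ + 1 else ⌊a⌋)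
    (k : ℤ) (h1 : (n:ℤ) * ⌊a⌋ ≤ k) (h2 : k < (n:ℤ) * ⌊a⌋ + n) :
    ∑ i, N k i = k := by
  have hk : (k - n * ⌊a⌋).toNat ≤ n := by omega
  rw [Finset.sum_congr rfl (fun i _ => hN k i), sum_if_lt hk]
  omega

lemma core_mem {n : ℕ} (hn : 5 ≤ n) (X : Set (Fin n → ℝ)) (hX : Convex ℝ X)
    (hmem : ∀ g ∈ alternatingGroup (Fin n), ∀ x ∈ X, (fun i => x (g⁻¹ i)) ∈ X)
    (a : ℝ) (N : ℤ → Fin n → ℤ)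
    (hN : ∀ k : ℤ, ∀ i : Fin n,
      N k i = if (i : ℕ) < (k - n * ⌊a⌋).toNat then ⌊a⌋ + 1 else ⌊a⌋)
    (w : Fin n → ℤ) (hwX : (fun i => (w i : ℝ)) ∈ X)
    (hcons : ∀ i j, w i ≤ w j + 1)
    (hlo : (n:ℤ) * ⌊a⌋ ≤ ∑ i, w i)
    (hhi : ((∑ i, w i : ℤ) : ℝ) ≤ n * a) :
    (fun i => (N (∑ i, w i) i : ℝ)) ∈ X := by
  classical
  set f : ℤ := ⌊a⌋ with hf
  set s : ℤ := ∑ i, w i with hs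
  have hn0 : (0:ℝ) < n := by positivity
  have hsn : s < n * f + n := by
    have h1 : (s:ℝ) ≤ n * a := hhi
    have h2 : (n:ℝ) * a < n * f + n := by
      have := Int.lt_floor_add_one a
      have hfa : a < (f:ℝ) + 1 := by rw [hf]; push_cast; linarith
      nlinarith
    have : (s:ℝ) < ((n * f + n : ℤ) : ℝ) := by push_cast; linarith
    exact_mod_cast this
  have hub : ∀ i, w i ≤ f + 1 := by
    intro i
    by_contra hco
    push_neg at hco
    have hall : ∀ j, f + 1 ≤ w j := fun j => by have := hcons i j; omega
    have hstrict : ∑ j, ((f:ℤ) + 1) < ∑ j, w j :=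
      Finset.sum_lt_sum (fun j _ => hall j) ⟨i, Finset.mem_univ i, by omega⟩
    have hconst : ∑ _j : Fin n, ((f:ℤ) + 1) = n * f + n := by
      rw [Finset.sum_const, Finset.card_univ, Fintype.card_fin, nsmul_eq_mul]; ring
    omega
  have hlb : ∀ i, f ≤ w i := by
    intro i
    by_contra hco
    push_neg at hco
    have hall : ∀ j, w j ≤ f := fun j => by have := hcons j i; omega
    have hstrict : ∑ j, w j < ∑ j, (f : ℤ) :=
      Finset.sum_lt_sum (fun j _ => hall j) ⟨i, Finset.mem_univ i, by omega⟩
    have hconst : ∑ _j : Fin n, (f:ℤ) = n * f := by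
      rw [Finset.sum_const, Finset.card_univ, Fintype.card_fin, nsmul_eq_mul]
    omega
  set S : Finset (Fin n) := Finset.univ.filter (fun i => w i = f + 1) with hS
  have hcS : (S.card : ℤ) = s - n * f := by
    have hterm : ∀ i : Fin n, w i = f + (if w i = f + 1 then 1 else 0) := by
      intro i
      have h1 := hub i
      have h2 := hlb i
      split <;> omega
    have : s = ∑ i, (f + (if w i = f + 1 then 1 else 0)) := by
      rw [hs]
      exact Finset.sum_congr rfl fun i _ => hterm i
    rw [Finset.sum_add_distrib, Finset.sum_const, Finset.card_univ, Fintype.card_fin,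
      nsmul_eq_mul, Finset.sum_boole] at this
    rw [hS]
    omega
  have hrn : (s - n * f).toNat ≤ n := by omega
  set T : Finset (Fin n) := Finset.univ.filter (fun i : Fin n => (i:ℕ) < (s - n * f).toNat)
    with hT
  have hcT : T.card = (s - n * f).toNat := card_filter_lt hrn
  have hST : S.card = T.card := by rw [hcT]; omega
  obtain ⟨σ, hσ⟩ := exists_perm_map S T hST
  obtain ⟨i0, j0, hne0, heq0⟩ : ∃ i0 j0 : Fin n, i0 ≠ j0 ∧ w i0 = w j0 := by
    by_cases h2 : 2 ≤ S.card
    · obtain ⟨i0, hi0, j0, hj0, hne0⟩ := Finset.one_lt_card.mp (show 1 < S.card by omega)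
      refine ⟨i0, j0, hne0, ?_⟩
      rw [(Finset.mem_filter.mp hi0).2, (Finset.mem_filter.mp hj0).2]
    · have hcc : 2 ≤ Sᶜ.card := by
        rw [Finset.card_compl, Fintype.card_fin]
        omega
      obtain ⟨i0, hi0, j0, hj0, hne0⟩ := Finset.one_lt_card.mp (by omega : 1 < Sᶜ.card)
      refine ⟨i0, j0, hne0, ?_⟩
      have hv : ∀ x ∈ Sᶜ, w x = f := by
        intro x hx
        have hnot := Finset.mem_compl.mp hx
        have : ¬ (w x = f + 1) := fun h => hnot (Finset.mem_filter.mpr ⟨Finset.mem_univ x, h⟩)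
        have h1 := hub x
        have h2 := hlb x
        omega
      rw [hv i0 hi0, hv j0 hj0]
  obtain ⟨g, hgA, hgval⟩ := exists_even_perm w σ i0 j0 hne0 heq0
  have hNval : ∀ k, w (g⁻¹ k) = N s k := by
    intro k
    rw [hgval k, hN]
    by_cases hk : (k:ℕ) < (s - n * f).toNat
    · have hkT : k ∈ T := Finset.mem_filter.mpr ⟨Finset.mem_univ k, hk⟩
      have hkS : σ⁻¹ k ∈ S := by
        rw [hσ (σ⁻¹ k)]
        simpa using hkT
      rw [if_pos hk]
      exact (Finset.mem_filter.mp hkS).2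
    · have hkT : k ∉ T := fun h => hk (Finset.mem_filter.mp h).2
      have hkS : σ⁻¹ k ∉ S := by
        rw [hσ (σ⁻¹ k)]
        simpa using hkT
      have hnot : ¬ (w (σ⁻¹ k) = f + 1) :=
        fun h => hkS (Finset.mem_filter.mpr ⟨Finset.mem_univ _, h⟩)
      have h1 := hub (σ⁻¹ k)
      have h2 := hlb (σ⁻¹ k)
      rw [if_neg hk]
      omega
  have hfin := hmem g hgA _ hwX
  have heq : (fun k => (w (g⁻¹ k) : ℝ)) = (fun k => (N s k : ℝ)) := by
    funext k
    rw [hNval k]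
  rw [← heq]
  exact hfin

/-- Let `n ≥ 5` and `X ⊆ ℝⁿ` convex and invariant under all even coordinate
permutations (the alternating group `A_n`), and let `(a,…,a) ∈ X` maximize `x ↦ ∑ xᵢ`
over `X`. For `n⌊a⌋ ≤ k ≤ ⌊na⌋` write `k = n⌊a⌋ + r` and let `N k` have its first `r`
coordinates equal to `⌊a⌋+1` and the rest equal to `⌊a⌋`. Then (1) `X` contains an
integer point iff `N k ∈ X` for some such `k`, and (2) if `k*` is the largest such `k`
with `N k* ∈ X`, then `N k*` maximizes `x ↦ ∑ xᵢ` over `X ∩ ℤⁿ`. -/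
theorem linear_algorithm_alternating_group (n : ℕ) (hn : 5 ≤ n)
    (X : Set (Fin n → ℝ)) (hX : Convex ℝ X)
    (hinv : ∀ g ∈ alternatingGroup (Fin n),
      (fun x : Fin n → ℝ => fun i => x (g⁻¹ i)) '' X = X)
    (a : ℝ) (ha : (fun _ : Fin n => a) ∈ X)
    (hmax : ∀ x ∈ X, ∑ i, x i ≤ n * a)
    (N : ℤ → Fin n → ℤ)
    (hN : ∀ k : ℤ, ∀ i : Fin n,
      N k i = if (i : ℕ) < (k - n * ⌊a⌋).toNat then ⌊a⌋ + 1 else ⌊a⌋) :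
    ((∃ x : Fin n → ℤ, (fun i => (x i : ℝ)) ∈ X) ↔
      ∃ k : ℤ, n * ⌊a⌋ ≤ k ∧ k ≤ ⌊(n : ℝ) * a⌋ ∧ (fun i => (N k i : ℝ)) ∈ X) ∧
    (∀ kstar : ℤ, n * ⌊a⌋ ≤ kstar → kstar ≤ ⌊(n : ℝ) * a⌋ →
      (fun i => (N kstar i : ℝ)) ∈ X →
      (∀ k : ℤ, kstar < k → k ≤ ⌊(n : ℝ) * a⌋ → (fun i => (N k i : ℝ)) ∉ X) →
      ∀ x : Fin n → ℤ, (fun i => (x i : ℝ)) ∈ X → ∑ i, x i ≤ ∑ i, N kstar i) := by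
  classical
  have hmem : ∀ g ∈ alternatingGroup (Fin n), ∀ x ∈ X, (fun i => x (g⁻¹ i)) ∈ X := by
    intro g hg x hx
    rw [← hinv g hg]
    exact ⟨x, hx, rfl⟩
  have hn3 : 3 ≤ n := by omega
  have hn0 : (0:ℝ) < n := by positivity
  have hfle : ((n:ℤ) * ⌊a⌋ : ℤ) ≤ ⌊(n:ℝ) * a⌋ := by
    rw [Int.le_floor]
    push_cast
    have := Int.floor_le a
    nlinarith
  have hfloorlt : (⌊(n:ℝ) * a⌋ : ℤ) < n * ⌊a⌋ + n := by
    have h1 : ((⌊(n:ℝ) * a⌋ : ℤ) : ℝ) ≤ n * a := Int.floor_le _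
    have h2 : (n:ℝ) * a < n * ⌊a⌋ + n := by
      have := Int.lt_floor_add_one a
      nlinarith
    have h3 : ((⌊(n:ℝ) * a⌋ : ℤ) : ℝ) < (((n:ℤ) * ⌊a⌋ + n : ℤ) : ℝ) := by
      push_cast
      linarith
    exact_mod_cast h3
  have hsumle : ∀ x : Fin n → ℤ, (fun i => (x i : ℝ)) ∈ X → ∑ i, x i ≤ ⌊(n:ℝ) * a⌋ := by
    intro x hx
    rw [Int.le_floor]
    push_cast
    simpa using hmax _ hx
  have main : ∀ x : Fin n → ℤ, (fun i => (x i : ℝ)) ∈ X → (n:ℤ) * ⌊a⌋ ≤ ∑ i, x i →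
      (fun i => (N (∑ i, x i) i : ℝ)) ∈ X := by
    intro x hx hxlo
    obtain ⟨w, hwX, hwsum, hwcons⟩ :=
      descent hn X hX hmem ((∑ i, (x i)^2).toNat) x le_rfl hx
    have hwhi : ((∑ i, w i : ℤ) : ℝ) ≤ n * a := by
      push_cast
      simpa using hmax _ hwX
    have hcore := core_mem hn X hX hmem a N hN w hwX hwcons (hwsum ▸ hxlo) hwhi
    rw [hwsum] at hcore
    exact hcore
  have hNconst : (fun i => (N ((n:ℤ) * ⌊a⌋) i : ℝ)) = (fun _ : Fin n => (⌊a⌋ : ℝ)) := by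
    funext i
    rw [hN]
    simp
  constructor
  · constructor
    · rintro ⟨x, hx⟩
      by_cases hge : (n:ℤ) * ⌊a⌋ ≤ ∑ i, x i
      · exact ⟨∑ i, x i, hge, hsumle x hx, main x hx hge⟩
      · push_neg at hge
        refine ⟨(n:ℤ) * ⌊a⌋, le_rfl, hfle, ?_⟩
        rw [hNconst]
        set s' : ℝ := ((∑ i, x i : ℤ) : ℝ) with hs'
        have hs'lt : s' < (n:ℝ) * ⌊a⌋ := by
          rw [hs']
          exact_mod_cast hge
        have hfa : ((n:ℝ) * ⌊a⌋) ≤ n * a := by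
          have := Int.floor_le a
          nlinarith
        have hd : 0 < (n:ℝ) * a - s' := by linarith
        set θ : ℝ := ((n:ℝ) * ⌊a⌋ - s') / ((n:ℝ) * a - s') with hθ
        have hθ0 : 0 ≤ θ := by
          rw [hθ]
          apply div_nonneg (by linarith) (by linarith)
        have hθ1 : θ ≤ 1 := by
          rw [hθ]
          rw [div_le_one hd]
          linarith
        have hyX : (1 - θ) • (fun i => (x i : ℝ)) + θ • (fun _ : Fin n => a) ∈ X :=
          hX hx ha (by linarith) hθ0 (by ring)
        refine const_mem hn3 X hX hmem _ hyX (⌊a⌋ : ℝ) ?_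
        have hsump : ∑ i, ((1 - θ) • (fun i => (x i : ℝ)) + θ • (fun _ : Fin n => a)) i
            = (1 - θ) * s' + θ * (n * a) := by
          simp only [Pi.add_apply, Pi.smul_apply, smul_eq_mul]
          rw [Finset.sum_add_distrib, ← Finset.mul_sum, ← Finset.mul_sum, Finset.sum_const,
            Finset.card_univ, Fintype.card_fin, nsmul_eq_mul, hs']
          push_cast
          ring
        rw [hsump]
        have hne0 : (n:ℝ) * a - s' ≠ 0 := ne_of_gt hd
        rw [hθ]
        field_simp
        ring
    · rintro ⟨k, -, -, hk⟩
      exact ⟨N k, hk⟩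
  · intro kstar h1 h2 h3 h4 x hx
    have hNsum : ∑ i, N kstar i = kstar := sum_N a N hN kstar h1 (by omega)
    rw [hNsum]
    by_contra hgt
    push_neg at hgt
    have hxlo : (n:ℤ) * ⌊a⌋ ≤ ∑ i, x i := by omega
    exact h4 (∑ i, x i) hgt (hsumle x hx) (main x hx hxlo)
end
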